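/- The sets R_0, R_1, R_2, R_3 partition F and form a three-class translation association scheme on the additive group of F: there exist natural numbers p^m_{k,l} for 0 ≤ k, l, m ≤ 3 such that for all k, l, m and every d ∈ R_m, the number of z ∈ F with z ∈ R_k and d + z ∈ R_l equals p^m_{k,l} (note that in characteristic 2 one has d − z = d + z, so the relations are symmetric). -/

import Mathlib

noncomputable section

open scoped BigOperators

/-- `M = 2^{2s} + 2^s + 1`. -/
abbrev Mof (s : ℕ) : ℕ := 2 ^ (2 * s) + 2 ^ s + 1

/-- The relative trace from `F` (of order `2^{3s}`) to its subfield `E` of order `2^s`: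
`Tr_{F/E}(x) = x + x^{2^s} + x^{2^{2s}}`, viewed as a map `F → F`. -/
def trFE {F : Type*} [Field F] (s : ℕ) (x : F) : F :=
  x + x ^ (2 ^ s) + x ^ (2 ^ (2 * s))

/-- `ψ(x) = 1` if the absolute trace `Tr_{F/𝔽₂}(x) = 0`, and `-1` otherwise. -/
def psi (F : Type*) [Field F] [Algebra (ZMod 2) F] (x : F) : ℤ :=
  if Algebra.trace (ZMod 2) F x = 0 then 1 else -1

/-- `ψ(cS) = ∑_{x ∈ S} ψ(c·x)`. -/
def psiSum (F : Type*) [Field F] [Algebra (ZMod 2) F] (c : F) (S : Set F) : ℤ :=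
  ∑ᶠ x ∈ S, psi F (c * x)

/-- `D = {u ∈ F^× : Tr_{F/E}(u⁻¹) = 0}`. -/
def Dset (F : Type*) [Field F] (s : ℕ) : Set F :=
  {u | u ≠ 0 ∧ trFE s u⁻¹ = 0}

/-- `S_a = {u ∈ F^× : Tr_{F/E}(u^{2^s+1}) = 0 ∧ Tr_{F/E}(ω^a u) = 0}`. -/
def Sa {F : Type*} [Field F] (s : ℕ) (ω : F) (a : ℤ) : Set F :=
  {u | u ≠ 0 ∧ trFE s (u ^ (2 ^ s + 1)) = 0 ∧ trFE s (ω ^ a * u) = 0}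

/-- `T₁ ⊆ ℤ/Mℤ`: classes `a` with `|S_a| = 2^s - 1`. -/
def T1 {F : Type*} [Field F] (s : ℕ) (ω : F) : Set (ZMod (Mof s)) :=
  {x | (Sa s ω (x.val : ℤ)).ncard = 2 ^ s - 1}

/-- `T₂ ⊆ ℤ/Mℤ`: classes `a` with `|S_a| = 2(2^s - 1)`. -/
def T2 {F : Type*} [Field F] (s : ℕ) (ω : F) : Set (ZMod (Mof s)) :=
  {x | (Sa s ω (x.val : ℤ)).ncard = 2 * (2 ^ s - 1)}

/-- `T₃ ⊆ ℤ/Mℤ`: classes `a` with `|S_a| = 0`. -/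
def T3 {F : Type*} [Field F] (s : ℕ) (ω : F) : Set (ZMod (Mof s)) :=
  {x | (Sa s ω (x.val : ℤ)).ncard = 0}

/-- The cyclotomic class `C_i^{(M,K)} = {g^{i+Mt} : t ∈ ℤ}`. -/
def cyc {K : Type*} [Field K] (M : ℕ) (g : K) (i : ℤ) : Set K :=
  {x | ∃ t : ℤ, x = g ^ (i + (M : ℤ) * t)}

/-- `⋃_{i ∈ T} C_i^{(M,K)}` for a set `T ⊆ ℤ/Mℤ` of indices. -/
def Rclass {K : Type*} [Field K] (s : ℕ) (g : K) (T : Set (ZMod (Mof s))) : Set K :=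
  ⋃ i ∈ T, cyc (Mof s) g ((i.val : ℤ))

/-- The family `R_0 = {0}`, `R_k = ⋃_{i ∈ T_k} C_i^{(M,K)}`, `k = 1, 2, 3`. -/
def Rfam {F K : Type*} [Field F] [Field K] (s : ℕ) (ω : F) (g : K) : Fin 4 → Set K :=
  ![{0}, Rclass s g (T1 s ω), Rclass s g (T2 s ω), Rclass s g (T3 s ω)]

/-- Indicator `[P] = 1` if `P` holds, `0` otherwise. -/
def Ind (P : Prop) : ℤ := @ite ℤ P (Classical.propDecidable P) 1 0


open scoped Classical
open Finset
set_option linter.unusedSectionVars false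
set_option linter.unusedVariables false
set_option maxHeartbeats 1000000

namespace S12

variable {F : Type*} [Field F] [Fintype F] {s : ℕ}

/-! ### Characteristic two basics -/

lemma charF2 (hs : 1 ≤ s) (hF : Fintype.card F = 2 ^ (3 * s)) : CharP F 2 := by
  obtain ⟨p, hc⟩ := CharP.exists F
  haveI := hc
  obtain ⟨n, hp, hcard⟩ := FiniteField.card F p
  have hdvd : p ∣ 2 ^ (3 * s) := by
    rw [← hF, hcard]
    exact dvd_pow_self p n.pos.ne'
  have hp2 : p = 2 :=
    (Nat.prime_dvd_prime_iff_eq hp Nat.prime_two).mp (Nat.Prime.dvd_of_dvd_pow hp hdvd)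
  rwa [hp2] at hc

section Char2

variable (hs : 1 ≤ s) (hF : Fintype.card F = 2 ^ (3 * s))
include hs hF

lemma addself (x : F) : x + x = 0 := by
  haveI := charF2 hs hF
  exact CharTwo.add_self_eq_zero x

lemma powQ (x : F) : x ^ 2 ^ (3 * s) = x := by
  rw [← hF]; exact FiniteField.pow_card x

lemma frobadd (x y : F) (n : ℕ) : (x + y) ^ 2 ^ n = x ^ 2 ^ n + y ^ 2 ^ n := by
  haveI := charF2 hs hF
  haveI : Fact (Nat.Prime 2) := ⟨Nat.prime_two⟩
  exact add_pow_char_pow x y 2 n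

lemma sq_inj : Function.Injective (fun x : F => x ^ 2) := by
  intro a b h
  simp only at h
  have h2 : (a + b) ^ 2 = 0 := by
    have := frobadd hs hF a b 1
    rw [pow_one] at this
    rw [this, h]
    exact addself hs hF _
  have := pow_eq_zero_iff (n := 2) (by norm_num) |>.mp h2
  have hb := addself hs hF b
  linear_combination this - hb

lemma sq_bij : Function.Bijective (fun x : F => x ^ 2) :=
  Finite.injective_iff_bijective.mp (sq_inj hs hF)

/-- square root map -/
def sqrtF (hs : 1 ≤ s) (hF : Fintype.card F = 2 ^ (3 * s)) : F ≃ F :=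
  Equiv.ofBijective _ (sq_bij hs hF)

lemma sqrtF_sq (x : F) : (sqrtF hs hF).symm x ^ 2 = x := by
  have := (sqrtF hs hF).apply_symm_apply x
  simpa [sqrtF, Equiv.ofBijective] using this

lemma sqrtF_of_sq (x : F) : (sqrtF hs hF).symm (x ^ 2) = x := by
  apply sq_inj hs hF
  simp only [sqrtF_sq hs hF]

end Char2



/-! ### tr0 and psi0 -/

/-- absolute trace to GF(2), as element of F -/
def tr0 (s : ℕ) (x : F) : F := ∑ j ∈ Finset.range (3 * s), x ^ 2 ^ j

/-- the canonical additive character -/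
def psi0 (s : ℕ) (x : F) : ℤ := if tr0 s x = 0 then 1 else -1

section Char2

variable (hs : 1 ≤ s) (hF : Fintype.card F = 2 ^ (3 * s))
include hs hF

lemma tr0_add (x y : F) : tr0 s (x + y) = tr0 s x + tr0 s y := by
  unfold tr0
  rw [← Finset.sum_add_distrib]
  exact Finset.sum_congr rfl fun j _ => frobadd hs hF x y j

omit hs hF in
lemma tr0_zero : tr0 s (0 : F) = 0 := by
  unfold tr0
  apply Finset.sum_eq_zero
  intro j _
  exact zero_pow (Nat.two_pow_pos j).ne'

lemma tr0_sq (x : F) : tr0 s (x ^ 2) = tr0 s x := by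
  unfold tr0
  have h1 : ∀ j : ℕ, (x ^ 2) ^ 2 ^ j = x ^ 2 ^ (j + 1) := by
    intro j
    rw [← pow_mul, pow_succ, mul_comm (2 ^ j) 2]
  rw [Finset.sum_congr rfl fun j _ => h1 j]
  have h2 := Finset.sum_range_succ' (fun j => x ^ 2 ^ j) (3 * s)
  have h3 := Finset.sum_range_succ (fun j => x ^ 2 ^ j) (3 * s)
  rw [h3] at h2
  have h4 : x ^ 2 ^ (3 * s) = x := powQ hs hF x
  have h5 : x ^ 2 ^ 0 = x := by norm_num
  rw [h4, h5] at h2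
  exact add_right_cancel h2.symm

lemma tr0_pow2 (x : F) (k : ℕ) : tr0 s (x ^ 2 ^ k) = tr0 s x := by
  induction k with
  | zero => norm_num
  | succ n ih =>
    have : x ^ 2 ^ (n + 1) = (x ^ 2 ^ n) ^ 2 := by
      rw [← pow_mul, pow_succ]
    rw [this, tr0_sq hs hF, ih]

lemma tr0_val (x : F) : tr0 s x = 0 ∨ tr0 s x = 1 := by
  haveI := charF2 hs hF
  haveI : Fact (Nat.Prime 2) := ⟨Nat.prime_two⟩
  have hsq : (tr0 s x) ^ 2 = tr0 s (x ^ 2) := by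
    unfold tr0
    have := map_sum (frobenius F 2) (fun j => x ^ 2 ^ j) (Finset.range (3 * s))
    simp only [frobenius_def] at this
    rw [this]
    apply Finset.sum_congr rfl
    intro j _
    rw [pow_right_comm]
  rw [tr0_sq hs hF] at hsq
  have : tr0 s x * (tr0 s x - 1) = 0 := by ring_nf; linear_combination hsq
  rcases mul_eq_zero.mp this with h | h
  · exact Or.inl h
  · exact Or.inr (by linear_combination h)

lemma psi0_mul (x y : F) : psi0 s (x + y) = psi0 s x * psi0 s y := by
  unfold psi0
  rw [tr0_add hs hF]
  rcases tr0_val hs hF x with h1 | h1 <;> rcases tr0_val hs hF y with h2 | h2 <;>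
    rw [h1, h2] <;> norm_num
  linear_combination addself hs hF (1 : F)

omit hs hF in
lemma psi0_zero : psi0 s (0 : F) = 1 := by
  unfold psi0
  rw [tr0_zero]
  norm_num

omit hs hF in
lemma psi0_val (x : F) : psi0 s x = 1 ∨ psi0 s x = -1 := by
  unfold psi0; split <;> simp

lemma exists_tr0_ne : ∃ v : F, tr0 s v ≠ 0 := by
  by_contra hcon
  push_neg at hcon
  set T : Polynomial F := ∑ j ∈ Finset.range (3 * s), Polynomial.X ^ 2 ^ j with hT
  have hev : ∀ x : F, T.eval x = tr0 s x := by
    intro x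
    rw [hT, Polynomial.eval_finset_sum]
    apply Finset.sum_congr rfl
    intro j _
    simp
  have hTz : T = 0 := by
    apply Polynomial.eq_zero_of_natDegree_lt_card_of_eval_eq_zero' T Finset.univ
    · intro x _; rw [hev x]; exact hcon x
    · calc T.natDegree ≤ 2 ^ (3 * s - 1) := by
            apply Polynomial.natDegree_sum_le_of_forall_le
            intro j hj
            rw [Polynomial.natDegree_X_pow]
            exact Nat.pow_le_pow_right (by norm_num) (by
              have := Finset.mem_range.mp hj; omega)
          _ < Finset.univ.card := by
            rw [Finset.card_univ, hF]
            exact Nat.pow_lt_pow_right (by norm_num) (by omega)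
  have hc1 : T.coeff 1 = 1 := by
    rw [hT, Polynomial.finset_sum_coeff]
    have : ∀ j ∈ Finset.range (3 * s), (Polynomial.X ^ 2 ^ j : Polynomial F).coeff 1
        = if j = 0 then 1 else 0 := by
      intro j _
      rw [Polynomial.coeff_X_pow]
      congr 1
      · simp only [eq_iff_iff]
        constructor
        · intro h
          by_contra hj
          have h2 : (2:ℕ) ^ 1 ≤ 2 ^ j := Nat.pow_le_pow_right (by norm_num) (by omega)
          simp only [pow_one] at h2
          omega
        · intro h; subst h; norm_num
    rw [Finset.sum_congr rfl this, Finset.sum_ite_eq' (Finset.range (3 * s)) 0 (fun _ => (1:F))]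
    simp only [Finset.mem_range]
    rw [if_pos (by omega)]
  rw [hTz] at hc1
  simp at hc1

lemma exists_tr0_ne_mul (y : F) (hy : y ≠ 0) : ∃ c : F, tr0 s (c * y) ≠ 0 := by
  obtain ⟨v, hv⟩ := exists_tr0_ne hs hF
  exact ⟨v * y⁻¹, by rwa [mul_assoc, inv_mul_cancel₀ hy, mul_one]⟩

/-- full orthogonality -/
lemma sum_psi0 (y : F) :
    ∑ c : F, psi0 s (c * y) = if y = 0 then ((2 ^ (3 * s) : ℕ) : ℤ) else 0 := by
  rcases eq_or_ne y 0 with h | h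
  · subst h
    simp only [mul_zero, psi0_zero, if_pos rfl, Finset.sum_const, Finset.card_univ, hF]
    norm_num
  · rw [if_neg h]
    obtain ⟨c₀, hc₀⟩ := exists_tr0_ne_mul hs hF y h
    have hrein : ∑ c : F, psi0 s (c * y) = ∑ c : F, psi0 s ((c + c₀) * y) :=
      (Fintype.sum_bijective (· + c₀) (Equiv.addRight c₀).bijective
        (fun c => psi0 s ((c + c₀) * y)) (fun c => psi0 s (c * y)) (fun x => rfl)).symm
    have hsplit : ∀ c : F, psi0 s ((c + c₀) * y) = psi0 s (c * y) * psi0 s (c₀ * y) := by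
      intro c
      rw [add_mul]
      exact psi0_mul hs hF _ _
    have hneg : psi0 s (c₀ * y) = -1 := by unfold psi0; rw [if_neg hc₀]
    rw [Finset.sum_congr rfl (fun c _ => hsplit c)] at hrein
    simp only [hneg, mul_neg, mul_one, Finset.sum_neg_distrib] at hrein
    omega

/-- subgroup orthogonality -/
lemma sum_psi0_sub (G : Finset F) (hadd : ∀ a ∈ G, ∀ b ∈ G, a + b ∈ G) (c : F) :
    ∑ x ∈ G, psi0 s (c * x) =
      if ∀ x ∈ G, tr0 s (c * x) = 0 then (G.card : ℤ) else 0 := by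
  split
  case isTrue hall =>
    rw [Finset.sum_congr rfl (fun x hx => by unfold psi0; rw [if_pos (hall x hx)])]
    simp
  case isFalse hne =>
    push_neg at hne
    obtain ⟨x₀, hx₀G, hx₀⟩ := hne
    have hrein : ∑ x ∈ G, psi0 s (c * x) = ∑ x ∈ G, psi0 s (c * (x + x₀)) := by
      apply Finset.sum_nbij' (i := fun x => x + x₀) (j := fun x => x + x₀)
      · intro a ha; exact hadd a ha x₀ hx₀G
      · intro a ha; exact hadd a ha x₀ hx₀G
      · intro a _; rw [add_assoc, addself hs hF, add_zero]
      · intro a _; rw [add_assoc, addself hs hF, add_zero]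
      · intro a _; rw [add_assoc, addself hs hF, add_zero]
    have hsplit : ∀ x : F, psi0 s (c * (x + x₀)) = psi0 s (c * x) * psi0 s (c * x₀) := by
      intro x
      rw [mul_add]
      exact psi0_mul hs hF _ _
    have hneg : psi0 s (c * x₀) = -1 := by unfold psi0; rw [if_neg hx₀]
    rw [Finset.sum_congr rfl (fun x _ => hsplit x)] at hrein
    simp only [hneg, mul_neg, mul_one, Finset.sum_neg_distrib] at hrein
    omega

end Char2

/-! ### The subfield E and the generator ω -/

/-- the subfield with `2^s` elements, as a finset -/
def Ef (s : ℕ) (F : Type*) [Field F] [Fintype F] : Finset F :=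
  Finset.univ.filter (fun x => x ^ 2 ^ s = x)

lemma mem_Ef {x : F} : x ∈ Ef s F ↔ x ^ 2 ^ s = x := by
  unfold Ef; simp

lemma zero_mem_Ef : (0 : F) ∈ Ef s F := by
  rw [mem_Ef]; exact zero_pow (Nat.two_pow_pos s).ne'

lemma one_mem_Ef : (1 : F) ∈ Ef s F := by rw [mem_Ef]; exact one_pow _

section Char2
variable (hs : 1 ≤ s) (hF : Fintype.card F = 2 ^ (3 * s))
include hs hF

lemma add_mem_Ef {a b : F} (ha : a ∈ Ef s F) (hb : b ∈ Ef s F) : a + b ∈ Ef s F := by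
  rw [mem_Ef] at *
  rw [frobadd hs hF, ha, hb]

omit hs hF in
lemma mul_mem_Ef {a b : F} (ha : a ∈ Ef s F) (hb : b ∈ Ef s F) : a * b ∈ Ef s F := by
  rw [mem_Ef] at *
  rw [mul_pow, ha, hb]

omit hs hF in
lemma inv_mem_Ef {a : F} (ha : a ∈ Ef s F) : a⁻¹ ∈ Ef s F := by
  rw [mem_Ef] at *
  rw [inv_pow, ha]

end Char2

section Omega
variable (hs : 1 ≤ s) (hF : Fintype.card F = 2 ^ (3 * s))
  {ω : F} (hω : ∀ x : F, x ≠ 0 → ∃ n : ℕ, x = ω ^ n)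
include hs hF hω

lemma omega_ne_zero : ω ≠ 0 := by
  intro h
  subst h
  have hsub : (Finset.univ : Finset F) ⊆ {0, 1} := by
    intro x _
    rcases eq_or_ne x 0 with hx | hx
    · simp [hx]
    · obtain ⟨n, hn⟩ := hω x hx
      rcases Nat.eq_zero_or_pos n with h0 | h0
      · subst h0; simp at hn; simp [hn]
      · rw [zero_pow h0.ne'] at hn; exact absurd hn hx
  have h2 : Fintype.card F ≤ 2 := by
    calc Fintype.card F = Finset.univ.card (α := F) := (Finset.card_univ).symm
    _ ≤ ({0, 1} : Finset F).card := Finset.card_le_card hsub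
    _ ≤ 2 := Finset.card_insert_le _ _ |>.trans (by simp)
  rw [hF] at h2
  have h3 : (2:ℕ) ^ 3 ≤ 2 ^ (3 * s) := Nat.pow_le_pow_right (by norm_num) (by omega)
  norm_num at h3
  omega

/-- ω as a unit -/
def uω (hs : 1 ≤ s) (hF : Fintype.card F = 2 ^ (3 * s))
    (hω : ∀ x : F, x ≠ 0 → ∃ n : ℕ, x = ω ^ n) : Fˣ :=
  Units.mk0 ω (omega_ne_zero hs hF hω)

lemma uω_val : ((uω hs hF hω : Fˣ) : F) = ω := rfl

lemma order_uω : orderOf (uω hs hF hω) = 2 ^ (3 * s) - 1 := by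
  have h := orderOf_eq_card_of_forall_mem_zpowers (g := uω hs hF hω) ?_
  · rw [h, Nat.card_eq_fintype_card, Fintype.card_units, hF]
  · intro x
    obtain ⟨n, hn⟩ := hω (x : F) (Units.ne_zero x)
    refine ⟨(n : ℤ), ?_⟩
    have : ((uω hs hF hω ^ (n:ℤ) : Fˣ) : F) = (x : F) := by
      rw [Units.val_zpow_eq_zpow_val, uω_val, zpow_natCast, ← hn]
    exact Units.ext this

lemma zpow_eq_one_iff (z : ℤ) : ω ^ z = 1 ↔ ((2 ^ (3 * s) - 1 : ℕ) : ℤ) ∣ z := by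
  have hcoe : ω ^ z = ((uω hs hF hω ^ z : Fˣ) : F) := by
    rw [Units.val_zpow_eq_zpow_val, uω_val]
  rw [hcoe]
  constructor
  · intro h
    have : uω hs hF hω ^ z = 1 := Units.ext (by rw [h]; rfl)
    rw [← order_uω hs hF hω]
    exact orderOf_dvd_iff_zpow_eq_one.mpr this
  · intro h
    rw [← order_uω hs hF hω] at h
    rw [orderOf_dvd_iff_zpow_eq_one.mp h]
    rfl

lemma zpow_inj_iff (z₁ z₂ : ℤ) : ω ^ z₁ = ω ^ z₂ ↔ ((2 ^ (3 * s) - 1 : ℕ) : ℤ) ∣ z₁ - z₂ := by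
  have hω0 := omega_ne_zero hs hF hω
  rw [← zpow_eq_one_iff hs hF hω (z₁ - z₂), zpow_sub₀ hω0,
    div_eq_one_iff_eq (zpow_ne_zero _ hω0)]

end Omega

lemma hQM (hs : 1 ≤ s) : 2 ^ (3 * s) - 1 = (2 ^ s - 1) * Mof s := by
  have e1 : 2 ^ (3 * s) = (2 ^ s) ^ 3 := by rw [← pow_mul, mul_comm]
  have e2 : 2 ^ (2 * s) = (2 ^ s) ^ 2 := by rw [← pow_mul, mul_comm]
  have ha : 2 ≤ 2 ^ s := by
    calc (2:ℕ) = 2 ^ 1 := (pow_one 2).symm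
    _ ≤ 2 ^ s := Nat.pow_le_pow_right (by norm_num) hs
  obtain ⟨b, hb⟩ : ∃ b, 2 ^ s = b + 1 := ⟨2 ^ s - 1, by omega⟩
  unfold Mof
  rw [e1, e2, hb]
  have h3 : (b + 1) ^ 3 = b * ((b + 1) ^ 2 + (b + 1) + 1) + 1 := by ring
  have h4 : (b+1) - 1 = b := by omega
  rw [h3, h4]
  omega

section Omega
variable (hs : 1 ≤ s) (hF : Fintype.card F = 2 ^ (3 * s))
  {ω : F} (hω : ∀ x : F, x ≠ 0 → ∃ n : ℕ, x = ω ^ n)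
include hs hF hω

lemma omega_M_mem_Ef (t : ℕ) : ω ^ (Mof s * t) ∈ Ef s F := by
  rw [mem_Ef, ← pow_mul]
  have hω0 := omega_ne_zero hs hF hω
  have key : ω ^ (Mof s * t * 2 ^ s) = ω ^ (Mof s * t) * (ω ^ ((2^(3*s) - 1) * t)) := by
    rw [← pow_add]
    congr 1
    rw [hQM hs]
    obtain ⟨b, hb⟩ : ∃ b, 2 ^ s = b + 1 := ⟨2 ^ s - 1, by have := Nat.one_le_two_pow (n := s); omega⟩
    rw [hb]
    simp only [Nat.add_sub_cancel]
    ring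
  rw [key]
  have : ω ^ ((2^(3*s) - 1) * t) = 1 := by
    have := (zpow_eq_one_iff hs hF hω (((2^(3*s) - 1) * t : ℕ) : ℤ)).mpr ⟨(t : ℤ), by push_cast; ring⟩
    rwa [zpow_natCast] at this
  rw [this, mul_one]

lemma card_Ef : (Ef s F).card = 2 ^ s := by
  have hω0 := omega_ne_zero hs hF hω
  have hq2 : 2 ≤ 2 ^ s := by
    calc (2:ℕ) = 2 ^ 1 := (pow_one 2).symm
    _ ≤ 2 ^ s := Nat.pow_le_pow_right (by norm_num) hs
  -- upper bound via roots of X^(2^s) - X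
  have hupper : (Ef s F).card ≤ 2 ^ s := by
    set P : Polynomial F := Polynomial.X ^ 2 ^ s - Polynomial.X with hP
    have hdeg : P.natDegree = 2 ^ s := by
      rw [hP]
      compute_degree
      · rw [if_neg (by omega : ¬ (1 = 2 ^ s))]
        norm_num
      · omega
    have hP0 : P ≠ 0 := fun h => by rw [h] at hdeg; simp at hdeg; omega
    have hsub : Ef s F ⊆ P.roots.toFinset := by
      intro x hx
      rw [Multiset.mem_toFinset, Polynomial.mem_roots hP0]
      rw [mem_Ef] at hx
      simp [hP, Polynomial.IsRoot, hx]
    calc (Ef s F).card ≤ P.roots.toFinset.card := Finset.card_le_card hsub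
    _ ≤ Multiset.card P.roots := Multiset.toFinset_card_le _
    _ ≤ P.natDegree := Polynomial.card_roots' P
    _ = 2 ^ s := hdeg
  -- lower bound via powers of ω
  have hlower : 2 ^ s ≤ (Ef s F).card := by
    have hsub : insert (0:F) ((Finset.range (2 ^ s - 1)).image (fun t => ω ^ (Mof s * t)))
        ⊆ Ef s F := by
      intro x hx
      rcases Finset.mem_insert.mp hx with h | h
      · rw [h]; exact zero_mem_Ef
      · obtain ⟨t, _, rfl⟩ := Finset.mem_image.mp h
        exact omega_M_mem_Ef hs hF hω t
    have hinj : Set.InjOn (fun t => ω ^ (Mof s * t)) (Finset.range (2 ^ s - 1)) := by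
      intro t₁ h₁ t₂ h₂ he
      simp only [Finset.coe_range, Set.mem_Iio] at h₁ h₂
      simp only at he
      have hdvd : ((2 ^ (3*s) - 1 : ℕ) : ℤ) ∣ ((Mof s * t₁ : ℕ) : ℤ) - ((Mof s * t₂ : ℕ) : ℤ) := by
        rw [← zpow_inj_iff hs hF hω, zpow_natCast, zpow_natCast, he]
      rw [hQM hs] at hdvd
      obtain ⟨k, hk⟩ := hdvd
      have hM : (0:ℤ) < (Mof s : ℤ) := by unfold Mof; positivity
      set c : ℤ := ((2^s - 1 : ℕ) : ℤ) with hc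
      have heq : (t₁ : ℤ) - t₂ = c * k := by
        have h5 : (Mof s : ℤ) * ((t₁ : ℤ) - t₂) = (Mof s : ℤ) * (c * k) := by
          push_cast at hk ⊢
          linarith [hk]
        exact mul_left_cancel₀ hM.ne' h5
      have hcpos : (0:ℤ) < c := by
        rw [hc]
        exact_mod_cast (by omega : 0 < 2^s - 1)
      have ht₁' : (t₁ : ℤ) < c := by rw [hc]; exact_mod_cast h₁
      have ht₂' : (t₂ : ℤ) < c := by rw [hc]; exact_mod_cast h₂
      have hk0 : k = 0 := by
        rcases lt_trichotomy k 0 with h | h | h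
        · nlinarith [Int.natCast_nonneg t₁, Int.natCast_nonneg t₂]
        · exact h
        · nlinarith [Int.natCast_nonneg t₁, Int.natCast_nonneg t₂]
      rw [hk0, mul_zero] at heq
      have : (t₁ : ℤ) = t₂ := by omega
      exact_mod_cast this
    have hcard : (insert (0:F) ((Finset.range (2 ^ s - 1)).image (fun t => ω ^ (Mof s * t)))).card
        = 2 ^ s := by
      rw [Finset.card_insert_of_notMem, Finset.card_image_of_injOn hinj, Finset.card_range]
      · omega
      · intro h
        obtain ⟨t, _, ht⟩ := Finset.mem_image.mp h
        exact pow_ne_zero _ hω0 ht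
    calc 2 ^ s = _ := hcard.symm
    _ ≤ (Ef s F).card := Finset.card_le_card hsub
  omega

end Omega

/-! ### trFE basics -/

/-- trace of E to GF(2), as element of F -/
def trE (s : ℕ) (x : F) : F := ∑ i ∈ Finset.range s, x ^ 2 ^ i

section TR
variable (hs : 1 ≤ s) (hF : Fintype.card F = 2 ^ (3 * s))
include hs hF

lemma pow22s (x : F) : (x ^ 2 ^ (2 * s)) ^ 2 ^ s = x := by
  rw [← pow_mul, ← pow_add]
  have : 2 * s + s = 3 * s := by ring
  rw [this, powQ hs hF]

lemma trFE_add (x y : F) : trFE s (x + y) = trFE s x + trFE s y := by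
  unfold trFE
  rw [frobadd hs hF, frobadd hs hF]
  ring

omit hs hF in
lemma trFE_zero : trFE s (0 : F) = 0 := by
  unfold trFE
  rw [zero_pow (Nat.two_pow_pos s).ne', zero_pow (Nat.two_pow_pos (2*s)).ne']
  ring

lemma trFE_mem_E (x : F) : (trFE s x) ^ 2 ^ s = trFE s x := by
  unfold trFE
  rw [frobadd hs hF, frobadd hs hF]
  rw [← pow_mul, ← pow_add]
  have h1 : s + s = 2 * s := by ring
  rw [h1, pow22s hs hF]
  ring

lemma lam_pow22s {lam : F} (hl : lam ∈ Ef s F) : lam ^ 2 ^ (2 * s) = lam := by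
  rw [mem_Ef] at hl
  have : 2 * s = s + s := by ring
  rw [this, pow_add, pow_mul, hl, hl]

lemma trFE_E_smul {lam : F} (hl : lam ∈ Ef s F) (x : F) :
    trFE s (lam * x) = lam * trFE s x := by
  have hl' := (mem_Ef.mp hl)
  unfold trFE
  rw [mul_pow, mul_pow, hl', lam_pow22s hs hF hl]
  ring

lemma trFE_of_E {lam : F} (hl : lam ∈ Ef s F) : trFE s lam = lam := by
  have hl' := mem_Ef.mp hl
  unfold trFE
  rw [hl', lam_pow22s hs hF hl]
  rw [addself hs hF lam, zero_add]

lemma trFE_one : trFE s (1 : F) = 1 := trFE_of_E hs hF one_mem_Ef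

lemma trFE_frob (x : F) : trFE s (x ^ 2 ^ s) = trFE s x := by
  have e1 : (x ^ 2 ^ s) ^ 2 ^ s = x ^ 2 ^ (2 * s) := by
    rw [← pow_mul, ← pow_add, two_mul]
  have e2 : (x ^ 2 ^ s) ^ 2 ^ (2 * s) = x := by
    rw [← pow_mul, ← pow_add]
    have h2 : s + 2 * s = 3 * s := by ring
    rw [h2, powQ hs hF]
  unfold trFE
  rw [e1, e2]
  ring

/-- key identity: absolute trace as E-trace of relative trace -/
lemma tr0_eq (z : F) : tr0 s z = ∑ i ∈ Finset.range s, (trFE s z) ^ 2 ^ i := by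
  unfold tr0
  have key : ∀ i ∈ Finset.range s, (trFE s z) ^ 2 ^ i
      = z ^ 2 ^ i + z ^ 2 ^ (s + i) + z ^ 2 ^ (s + (s + i)) := by
    intro i _
    unfold trFE
    rw [frobadd hs hF, frobadd hs hF]
    have e1 : (z ^ 2 ^ s) ^ 2 ^ i = z ^ 2 ^ (s + i) := by
      rw [← pow_mul, ← pow_add]
    have e2 : (z ^ 2 ^ (2 * s)) ^ 2 ^ i = z ^ 2 ^ (s + (s + i)) := by
      rw [← pow_mul, ← pow_add]
      congr 2
      ring
    rw [e1, e2]
  rw [Finset.sum_congr rfl key]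
  have h3 : 3 * s = s + (s + s) := by ring
  rw [h3, Finset.sum_range_add, Finset.sum_range_add, Finset.sum_add_distrib,
    Finset.sum_add_distrib]
  ring

lemma tr0_of_trFE_zero {z : F} (h : trFE s z = 0) : tr0 s z = 0 := by
  rw [tr0_eq hs hF, h]
  apply Finset.sum_eq_zero
  intro i _
  exact zero_pow (Nat.two_pow_pos i).ne'

end TR

section Omega
variable (hs : 1 ≤ s) (hF : Fintype.card F = 2 ^ (3 * s))
  {ω : F} (hω : ∀ x : F, x ≠ 0 → ∃ n : ℕ, x = ω ^ n)
include hs hF hω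

lemma exists_trE_ne : ∃ mu ∈ Ef s F, trE s mu ≠ 0 := by
  by_contra hcon
  push_neg at hcon
  set T : Polynomial F := ∑ i ∈ Finset.range s, Polynomial.X ^ 2 ^ i with hT
  have hev : ∀ x : F, T.eval x = trE s x := by
    intro x
    rw [hT, Polynomial.eval_finset_sum]
    apply Finset.sum_congr rfl
    intro j _
    simp
  have hTz : T = 0 := by
    apply Polynomial.eq_zero_of_natDegree_lt_card_of_eval_eq_zero' T (Ef s F)
    · intro x hx; rw [hev x]; exact hcon x hx
    · calc T.natDegree ≤ 2 ^ (s - 1) := by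
            apply Polynomial.natDegree_sum_le_of_forall_le
            intro j hj
            rw [Polynomial.natDegree_X_pow]
            exact Nat.pow_le_pow_right (by norm_num) (by
              have := Finset.mem_range.mp hj; omega)
          _ < (Ef s F).card := by
            rw [card_Ef hs hF hω]
            exact Nat.pow_lt_pow_right (by norm_num) (by omega)
  have hc1 : T.coeff 1 = 1 := by
    rw [hT, Polynomial.finset_sum_coeff]
    have : ∀ j ∈ Finset.range s, (Polynomial.X ^ 2 ^ j : Polynomial F).coeff 1
        = if j = 0 then 1 else 0 := by
      intro j _
      rw [Polynomial.coeff_X_pow]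
      congr 1
      simp only [eq_iff_iff]
      constructor
      · intro h
        by_contra hj
        have h2 : (2:ℕ) ^ 1 ≤ 2 ^ j := Nat.pow_le_pow_right (by norm_num) (by omega)
        simp only [pow_one] at h2
        omega
      · intro h; subst h; norm_num
    rw [Finset.sum_congr rfl this, Finset.sum_ite_eq' (Finset.range s) 0 (fun _ => (1:F))]
    simp only [Finset.mem_range]
    rw [if_pos (by omega)]
  rw [hTz] at hc1
  simp at hc1

/-- orthogonality over E -/
lemma sum_psi0_Ef (y : F) :
    ∑ lam ∈ Ef s F, psi0 s (lam * y) = if trFE s y = 0 then ((2 ^ s : ℕ) : ℤ) else 0 := by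
  have hcomm : ∀ lam : F, psi0 s (lam * y) = psi0 s (y * lam) := by
    intro lam; rw [mul_comm]
  rw [Finset.sum_congr rfl (fun lam _ => hcomm lam)]
  rw [sum_psi0_sub hs hF (Ef s F) (fun a ha b hb => add_mem_Ef hs hF ha hb) y]
  rw [card_Ef hs hF hω]
  congr 1
  simp only [eq_iff_iff]
  constructor
  · intro hall
    by_contra hne
    set e : F := trFE s y with he
    have heE : e ∈ Ef s F := mem_Ef.mpr (trFE_mem_E hs hF y)
    obtain ⟨mu, hmuE, hmu⟩ := exists_trE_ne hs hF hω
    set lam : F := mu * e⁻¹ with hlam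
    have hlamE : lam ∈ Ef s F := mul_mem_Ef hmuE (inv_mem_Ef heE)
    have h1 : trFE s (lam * y) = mu := by
      rw [trFE_E_smul hs hF hlamE, ← he, hlam, mul_assoc, inv_mul_cancel₀ hne, mul_one]
    have h2 : tr0 s (y * lam) = trE s mu := by
      rw [tr0_eq hs hF, mul_comm y lam, h1]
      rfl
    have := hall lam hlamE
    rw [h2] at this
    exact hmu this
  · intro h0 lam hlamE
    apply tr0_of_trFE_zero hs hF
    rw [mul_comm y lam, trFE_E_smul hs hF hlamE, h0, mul_zero]

/-- cardinality of hyperplanes -/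
lemma card_Hx {x : F} (hx : x ≠ 0) :
    (Finset.univ.filter (fun u : F => trFE s (x * u) = 0)).card = 2 ^ (2 * s) := by
  have key : (Finset.univ.filter (fun u : F => trFE s (x * u) = 0)).card * 2 ^ s
      = 2 ^ (3 * s) := by
    have hbij : ((Finset.univ.filter (fun u : F => trFE s (x * u) = 0)) ×ˢ Ef s F).card
        = (Finset.univ : Finset F).card := by
      apply Finset.card_nbij' (i := fun p => p.1 + p.2 * x⁻¹)
        (j := fun u => (u + trFE s (x * u) * x⁻¹, trFE s (x * u)))
      · intro p hp
        exact Finset.mem_univ _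
      · intro u _
        rw [Finset.mem_coe, Finset.mem_product]
        constructor
        · simp only [Finset.mem_filter, Finset.mem_univ, true_and]
          rw [mul_add, trFE_add hs hF]
          have hxx : x * (trFE s (x * u) * x⁻¹) = trFE s (x * u) := by
            field_simp
          rw [hxx, trFE_of_E hs hF (mem_Ef.mpr (trFE_mem_E hs hF _)), addself hs hF]
        · exact mem_Ef.mpr (trFE_mem_E hs hF _)
      · intro p hp
        rw [Finset.mem_coe, Finset.mem_product] at hp
        obtain ⟨hp1, hp2⟩ := hp
        simp only [Finset.mem_filter, Finset.mem_univ, true_and] at hp1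
        have h1 : trFE s (x * (p.1 + p.2 * x⁻¹)) = p.2 := by
          rw [mul_add, trFE_add hs hF, hp1, zero_add]
          have hxx : x * (p.2 * x⁻¹) = p.2 := by field_simp
          rw [hxx, trFE_of_E hs hF hp2]
        simp only [h1]
        have : p.1 + p.2 * x⁻¹ + p.2 * x⁻¹ = p.1 := by
          rw [add_assoc, addself hs hF, add_zero]
        rw [this]
      · intro u _
        simp only
        rw [add_assoc, addself hs hF, add_zero]
    rw [Finset.card_product, card_Ef hs hF hω, Finset.card_univ, hF] at hbij
    exact hbij
  have h3 : (2:ℕ) ^ (3 * s) = 2 ^ (2 * s) * 2 ^ s := by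
    rw [← pow_add]
    congr 1
    ring
  rw [h3] at key
  exact Nat.eq_of_mul_eq_mul_right (Nat.two_pow_pos s) key

end Omega

/-! ### The quadratic form Q and its zero counts -/

def Qf (s : ℕ) (u : F) : F := trFE s (u ^ (2 ^ s + 1))

def Bf (s : ℕ) (u v : F) : F := trFE s (u ^ 2 ^ s * v + u * v ^ 2 ^ s)

def SxF (s : ℕ) (x : F) : Finset F :=
  Finset.univ.filter (fun u => u ≠ 0 ∧ trFE s (u ^ (2 ^ s + 1)) = 0 ∧ trFE s (x * u) = 0)

def Zf (s : ℕ) (F : Type*) [Field F] [Fintype F] : Finset F :=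
  Finset.univ.filter (fun u => u ≠ 0 ∧ Qf s u = 0)

section TR
variable (hs : 1 ≤ s) (hF : Fintype.card F = 2 ^ (3 * s))
include hs hF

lemma powA (a : F) : (a ^ 2 ^ s) ^ 2 ^ s = a ^ 2 ^ (2 * s) := by
  rw [← pow_mul, ← pow_add, two_mul]

lemma powC (a : F) : (a ^ 2 ^ s) ^ 2 ^ (2 * s) = a := by
  rw [← pow_mul, ← pow_add]
  have h : s + 2 * s = 3 * s := by ring
  rw [h, powQ hs hF]

lemma powD (a : F) : (a ^ 2 ^ (2 * s)) ^ 2 ^ (2 * s) = a ^ 2 ^ s := by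
  rw [← pow_mul, ← pow_add]
  have h : 2 * s + 2 * s = s + 3 * s := by ring
  rw [h, pow_add, pow_mul]
  rw [powQ hs hF]

omit hs hF in
lemma Qf_zero : Qf s (0 : F) = 0 := by
  unfold Qf
  rw [zero_pow (by positivity), trFE_zero]

lemma Qf_add (u v : F) : Qf s (u + v) = Qf s u + Qf s v + Bf s u v := by
  unfold Qf Bf
  have h : (u + v) ^ (2 ^ s + 1)
      = u ^ (2 ^ s + 1) + v ^ (2 ^ s + 1) + (u ^ 2 ^ s * v + u * v ^ 2 ^ s) := by
    rw [pow_succ, pow_succ, pow_succ, frobadd hs hF]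
    ring
  rw [h, trFE_add hs hF, trFE_add hs hF]

lemma Qf_of_E {lam : F} (hl : lam ∈ Ef s F) : Qf s lam = lam ^ 2 := by
  unfold Qf
  have h : lam ^ (2 ^ s + 1) = lam ^ 2 := by
    rw [pow_succ, mem_Ef.mp hl, ← sq]
  rw [h]
  have hl2 : lam ^ 2 ∈ Ef s F := by rw [sq]; exact mul_mem_Ef hl hl
  exact trFE_of_E hs hF hl2

lemma Bf_self (u : F) : Bf s u u = 0 := by
  unfold Bf
  have h : u ^ 2 ^ s * u + u * u ^ 2 ^ s = u ^ 2 ^ s * u + u ^ 2 ^ s * u := by ring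
  rw [h, addself hs hF, trFE_zero]

lemma Bf_E_right (u : F) {lam : F} (hl : lam ∈ Ef s F) : Bf s u lam = 0 := by
  unfold Bf
  have h : u ^ 2 ^ s * lam + u * lam ^ 2 ^ s = lam * (u ^ 2 ^ s + u) := by
    rw [mem_Ef.mp hl]; ring
  rw [h, trFE_E_smul hs hF hl, trFE_add hs hF, trFE_frob hs hF, addself hs hF, mul_zero]

lemma Qf_E_shift (u : F) {lam : F} (hl : lam ∈ Ef s F) :
    Qf s (u + lam) = Qf s u + lam ^ 2 := by
  rw [Qf_add hs hF, Qf_of_E hs hF hl, Bf_E_right hs hF u hl, add_zero]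

lemma Qf_E_scale {lam : F} (hl : lam ∈ Ef s F) (u : F) :
    Qf s (lam * u) = lam ^ 2 * Qf s u := by
  unfold Qf
  have hl1 : lam ^ (2 ^ s + 1) = lam ^ 2 := by
    rw [pow_succ, mem_Ef.mp hl, ← sq]
  have h : (lam * u) ^ (2 ^ s + 1) = lam ^ 2 * u ^ (2 ^ s + 1) := by
    rw [mul_pow, hl1]
  have hl2 : lam ^ 2 ∈ Ef s F := by rw [sq]; exact mul_mem_Ef hl hl
  rw [h, trFE_E_smul hs hF hl2]

lemma Bf_add_right (u v w : F) : Bf s u (v + w) = Bf s u v + Bf s u w := by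
  unfold Bf
  rw [← trFE_add hs hF, frobadd hs hF]
  congr 1
  ring

lemma Bf_E_scale_left {lam : F} (hl : lam ∈ Ef s F) (u v : F) :
    Bf s (lam * u) v = lam * Bf s u v := by
  unfold Bf
  rw [← trFE_E_smul hs hF hl, mul_pow, mem_Ef.mp hl]
  congr 1
  ring

lemma Bf_E_scale_right {lam : F} (hl : lam ∈ Ef s F) (u v : F) :
    Bf s u (lam * v) = lam * Bf s u v := by
  unfold Bf
  rw [← trFE_E_smul hs hF hl, mul_pow, mem_Ef.mp hl]
  congr 1
  ring

lemma Bf_eq (u v : F) : Bf s u v = trFE s ((u ^ 2 ^ s + u ^ 2 ^ (2 * s)) * v) := by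
  unfold Bf trFE
  rw [frobadd hs hF (u ^ 2 ^ s * v) (u * v ^ 2 ^ s) s,
    frobadd hs hF (u ^ 2 ^ s * v) (u * v ^ 2 ^ s) (2 * s)]
  rw [mul_pow, mul_pow, mul_pow, mul_pow, mul_pow, mul_pow]
  rw [frobadd hs hF (u ^ 2 ^ s) (u ^ 2 ^ (2 * s)) s,
    frobadd hs hF (u ^ 2 ^ s) (u ^ 2 ^ (2 * s)) (2 * s)]
  rw [powA hs hF u, powA hs hF v, powC hs hF u, powC hs hF v,
    pow22s hs hF u, powD hs hF u]
  ring

lemma Tr_nondeg {c : F} (h : ∀ v : F, trFE s (c * v) = 0) : c = 0 := by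
  by_contra hc
  have := h c⁻¹
  rw [mul_inv_cancel₀ hc, trFE_one hs hF] at this
  exact one_ne_zero this

lemma mem_Ef_of_q2_fixed {c : F} (h : c ^ 2 ^ (2 * s) = c) : c ∈ Ef s F := by
  rw [mem_Ef]
  have := powD hs hF c
  rw [h, h] at this
  exact this.symm

lemma sqrt_mem_Ef {x : F} (hx : x ∈ Ef s F) : (sqrtF hs hF).symm x ∈ Ef s F := by
  rw [mem_Ef]
  have key : ((sqrtF hs hF).symm x ^ 2 ^ s) ^ 2 = ((sqrtF hs hF).symm x) ^ 2 := by
    rw [pow_right_comm, sqrtF_sq hs hF, mem_Ef.mp hx]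
  exact sq_inj hs hF key

lemma Qf_mem_Ef (u : F) : Qf s u ∈ Ef s F := mem_Ef.mpr (trFE_mem_E hs hF _)

end TR

section Omega
variable (hs : 1 ≤ s) (hF : Fintype.card F = 2 ^ (3 * s))
  {ω : F} (hω : ∀ x : F, x ≠ 0 → ∃ n : ℕ, x = ω ^ n)
include hs hF hω

/-- generic coset count: on any E-shift-closed set, Q vanishes on a 1/2^s fraction -/
lemma card_Z0_filter (P : F → Prop) (hP : ∀ u lam, P u → lam ∈ Ef s F → P (u + lam)) :
    (Finset.univ.filter (fun u : F => P u ∧ Qf s u = 0)).card * 2 ^ s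
      = (Finset.univ.filter (fun u : F => P u)).card := by
  have hbij : ((Finset.univ.filter (fun u : F => P u ∧ Qf s u = 0)) ×ˢ Ef s F).card
      = (Finset.univ.filter (fun u : F => P u)).card := by
    apply Finset.card_nbij' (i := fun p => p.1 + p.2)
      (j := fun u => (u + (sqrtF hs hF).symm (Qf s u), (sqrtF hs hF).symm (Qf s u)))
    · intro p hp
      rw [Finset.mem_coe, Finset.mem_product] at hp
      obtain ⟨hp1, hp2⟩ := hp
      simp only [Finset.mem_coe, Finset.mem_filter, Finset.mem_univ, true_and] at hp1 ⊢
      exact hP _ _ hp1.1 hp2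
    · intro u hu
      simp only [Finset.mem_coe, Finset.mem_filter, Finset.mem_univ, true_and] at hu
      rw [Finset.mem_coe, Finset.mem_product]
      have hQE : Qf s u ∈ Ef s F := Qf_mem_Ef hs hF u
      have hrE : (sqrtF hs hF).symm (Qf s u) ∈ Ef s F := sqrt_mem_Ef hs hF hQE
      constructor
      · simp only [Finset.mem_filter, Finset.mem_univ, true_and]
        refine ⟨hP _ _ hu hrE, ?_⟩
        rw [Qf_E_shift hs hF u hrE, sqrtF_sq hs hF, addself hs hF]
      · exact hrE
    · intro p hp
      rw [Finset.mem_coe, Finset.mem_product] at hp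
      obtain ⟨hp1, hp2⟩ := hp
      simp only [Finset.mem_filter, Finset.mem_univ, true_and] at hp1
      have h1 : Qf s (p.1 + p.2) = p.2 ^ 2 := by
        rw [Qf_E_shift hs hF p.1 hp2, hp1.2, zero_add]
      simp only [h1, sqrtF_of_sq hs hF]
      have : p.1 + p.2 + p.2 = p.1 := by rw [add_assoc, addself hs hF, add_zero]
      rw [this]
    · intro u _
      simp only
      rw [add_assoc, addself hs hF, add_zero]
  rw [Finset.card_product, card_Ef hs hF hω] at hbij
  exact hbij

lemma card_Z0 : (Finset.univ.filter (fun u : F => Qf s u = 0)).card = 2 ^ (2 * s) := by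
  have h := card_Z0_filter hs hF hω (fun _ => True) (fun _ _ _ _ => trivial)
  simp only [true_and, Finset.filter_true] at h
  rw [Finset.card_univ, hF] at h
  have h3 : (2:ℕ) ^ (3 * s) = 2 ^ (2 * s) * 2 ^ s := by
    rw [← pow_add]; congr 1; ring
  rw [h3] at h
  exact Nat.eq_of_mul_eq_mul_right (Nat.two_pow_pos s) h

lemma card_Zf : (Zf s F).card = 2 ^ (2 * s) - 1 := by
  have h0 : (0:F) ∈ Finset.univ.filter (fun u : F => Qf s u = 0) := by
    simp [Qf_zero]
  have he : Zf s F = (Finset.univ.filter (fun u : F => Qf s u = 0)).erase 0 := by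
    ext u
    unfold Zf
    simp only [Finset.mem_filter, Finset.mem_univ, true_and, Finset.mem_erase]
  rw [he, Finset.card_erase_of_mem h0, card_Z0 hs hF hω]

/-- case Tr x = 0 : |S(x)| = 2^s - 1 -/
lemma card_SxF_tr_zero {x : F} (hx : x ≠ 0) (htr : trFE s x = 0) :
    (SxF s x).card = 2 ^ s - 1 := by
  have hP : ∀ (u lam : F), trFE s (x * u) = 0 → lam ∈ Ef s F → trFE s (x * (u + lam)) = 0 := by
    intro u lam hu hl
    rw [mul_add, trFE_add hs hF, hu, zero_add, mul_comm x lam, trFE_E_smul hs hF hl, htr,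
      mul_zero]
  have h := card_Z0_filter hs hF hω (fun u => trFE s (x * u) = 0) hP
  rw [card_Hx hs hF hω hx] at h
  have h3 : (2:ℕ) ^ (2 * s) = 2 ^ s * 2 ^ s := by rw [← pow_add, two_mul]
  rw [h3] at h
  have hcard : (Finset.univ.filter (fun u : F => trFE s (x * u) = 0 ∧ Qf s u = 0)).card
      = 2 ^ s := Nat.eq_of_mul_eq_mul_right (Nat.two_pow_pos s) h
  have h0 : (0:F) ∈ Finset.univ.filter (fun u : F => trFE s (x * u) = 0 ∧ Qf s u = 0) := by
    simp [Qf_zero, mul_zero, trFE_zero]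
  have he : SxF s x
      = (Finset.univ.filter (fun u : F => trFE s (x * u) = 0 ∧ Qf s u = 0)).erase 0 := by
    ext u
    unfold SxF Qf
    simp only [Finset.mem_filter, Finset.mem_univ, true_and, Finset.mem_erase]
    tauto
  rw [he, Finset.card_erase_of_mem h0, hcard]

end Omega

section Char2
variable (hs : 1 ≤ s) (hF : Fintype.card F = 2 ^ (3 * s))
include hs hF

lemma eq_of_add_eq_zero' {a b : F} (h : a + b = 0) : a = b := by
  linear_combination h - addself hs hF b

lemma Bf_mem_Ef (u v : F) : Bf s u v ∈ Ef s F := by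
  unfold Bf
  exact mem_Ef.mpr (trFE_mem_E hs hF _)

end Char2
section Omega
variable (hs : 1 ≤ s) (hF : Fintype.card F = 2 ^ (3 * s))
  {ω : F} (hω : ∀ x : F, x ≠ 0 → ∃ n : ℕ, x = ω ^ n)
include hs hF hω

/-- case Tr x ≠ 0 : |S(x)| = 0 or 2(2^s - 1) -/
lemma card_SxF_tr_ne {x : F} (htr : trFE s x ≠ 0) :
    (SxF s x).card = 0 ∨ (SxF s x).card = 2 * (2 ^ s - 1) := by
  have hq2 : 2 ≤ 2 ^ s := by
    calc (2:ℕ) = 2 ^ 1 := (pow_one 2).symm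
    _ ≤ 2 ^ s := Nat.pow_le_pow_right (by norm_num) hs
  have hx : x ≠ 0 := by
    intro h
    rw [h] at htr
    exact htr trFE_zero
  set Hx : Finset F := Finset.univ.filter (fun u => trFE s (x * u) = 0) with hHxdef
  have hHxmem : ∀ u : F, u ∈ Hx ↔ trFE s (x * u) = 0 := by
    intro u; rw [hHxdef]; simp
  have hcardHx : Hx.card = 2 ^ (2 * s) := card_Hx hs hF hω hx
  have hEHx : ∀ lam : F, lam ∈ Ef s F → lam ∈ Hx → lam = 0 := by
    intro lam hl hlH
    rw [hHxmem, mul_comm, trFE_E_smul hs hF hl] at hlH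
    rcases mul_eq_zero.mp hlH with h | h
    · exact h
    · exact absurd h htr
  -- choose θ
  have h0Hx : (0:F) ∈ Hx := by rw [hHxmem, mul_zero, trFE_zero]
  have hne1 : (Hx.erase 0).Nonempty := by
    rw [← Finset.card_pos, Finset.card_erase_of_mem h0Hx, hcardHx]
    have : 2 ^ s ≤ 2 ^ (2 * s) := Nat.pow_le_pow_right (by norm_num) (by omega)
    omega
  obtain ⟨θ, hθe⟩ := hne1
  have hθ0 : θ ≠ 0 := (Finset.mem_erase.mp hθe).1
  have hθHx : θ ∈ Hx := (Finset.mem_erase.mp hθe).2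
  -- choose θ'
  set Eθ : Finset F := (Ef s F).image (fun lam => lam * θ) with hEθdef
  have hEθsub : Eθ ⊆ Hx := by
    intro y hy
    rw [hEθdef] at hy
    obtain ⟨lam, hl, rfl⟩ := Finset.mem_image.mp hy
    rw [hHxmem]
    have : x * (lam * θ) = lam * (x * θ) := by ring
    rw [this, trFE_E_smul hs hF hl, (hHxmem θ).mp hθHx, mul_zero]
  have hcardEθ : Eθ.card = 2 ^ s := by
    rw [hEθdef, Finset.card_image_of_injective _ (mul_left_injective₀ hθ0), card_Ef hs hF hω]
  have hne2 : (Hx \ Eθ).Nonempty := by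
    rw [← Finset.card_pos, Finset.card_sdiff_of_subset hEθsub, hcardHx, hcardEθ]
    have h2s : 2 ^ s * 2 ^ s = 2 ^ (2 * s) := by rw [← pow_add, two_mul]
    have hm : 2 ^ s * 2 ≤ 2 ^ s * 2 ^ s := Nat.mul_le_mul_left _ hq2
    omega
  obtain ⟨θ', hθ'e⟩ := hne2
  have hθ'Hx : θ' ∈ Hx := (Finset.mem_sdiff.mp hθ'e).1
  have hθ'nE : θ' ∉ Eθ := (Finset.mem_sdiff.mp hθ'e).2
  -- independence
  have hindep : ∀ lam mu : F, lam ∈ Ef s F → mu ∈ Ef s F →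
      lam * θ + mu * θ' = 0 → lam = 0 ∧ mu = 0 := by
    intro lam mu hl hm h0
    by_cases hmu : mu = 0
    · subst hmu
      rw [zero_mul, add_zero] at h0
      exact ⟨(mul_eq_zero.mp h0).resolve_right hθ0, rfl⟩
    · exfalso
      apply hθ'nE
      rw [hEθdef, Finset.mem_image]
      refine ⟨mu⁻¹ * lam, mul_mem_Ef (inv_mem_Ef hm) hl, ?_⟩
      have h1 : lam * θ = mu * θ' := eq_of_add_eq_zero' hs hF h0
      have h2 : mu⁻¹ * (mu * θ') = θ' := by rw [← mul_assoc, inv_mul_cancel₀ hmu, one_mul]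
      rw [← h2, ← h1]
      ring
  -- the quadratic form coefficients
  have haE : Qf s θ ∈ Ef s F := Qf_mem_Ef hs hF θ
  have hbE : Qf s θ' ∈ Ef s F := Qf_mem_Ef hs hF θ'
  have hcE : Bf s θ θ' ∈ Ef s F := Bf_mem_Ef hs hF θ θ'
  set a : F := Qf s θ with hadef
  set b : F := Qf s θ' with hbdef
  set c : F := Bf s θ θ' with hcdef
  -- c ≠ 0
  have hc : c ≠ 0 := by
    intro hc0
    -- m3 surjective
    have hm3inj : ∀ t₁ ∈ (Ef s F) ×ˢ (Ef s F) ×ˢ (Ef s F), ∀ t₂ ∈ (Ef s F) ×ˢ (Ef s F) ×ˢ (Ef s F),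
        (t₁.1 * θ + t₁.2.1 * θ' + t₁.2.2 : F) = t₂.1 * θ + t₂.2.1 * θ' + t₂.2.2 → t₁ = t₂ := by
      intro t₁ h₁ t₂ h₂ heq
      rw [Finset.mem_product] at h₁ h₂
      rw [Finset.mem_product] at h₁ h₂
      have h₁a := h₁.1
      have h₁b := h₁.2.1
      have h₁c := h₁.2.2
      have h₂a := h₂.1
      have h₂b := h₂.2.1
      have h₂c := h₂.2.2
      have hd : (t₁.1 + t₂.1) * θ + (t₁.2.1 + t₂.2.1) * θ' + (t₁.2.2 + t₂.2.2) = 0 := by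
        linear_combination heq + addself hs hF (t₂.1 * θ + t₂.2.1 * θ' + t₂.2.2)
      have hdc : t₁.2.2 + t₂.2.2 = 0 := by
        have happ := congrArg (fun z => trFE s (x * z)) hd
        simp only [mul_zero, trFE_zero] at happ
        rw [mul_add, mul_add, trFE_add hs hF, trFE_add hs hF] at happ
        have e1 : x * ((t₁.1 + t₂.1) * θ) = (t₁.1 + t₂.1) * (x * θ) := by ring
        have e2 : x * ((t₁.2.1 + t₂.2.1) * θ') = (t₁.2.1 + t₂.2.1) * (x * θ') := by ring
        have e3 : x * (t₁.2.2 + t₂.2.2) = (t₁.2.2 + t₂.2.2) * x := by ring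
        rw [e1, e2, e3, trFE_E_smul hs hF (add_mem_Ef hs hF h₁a h₂a),
          trFE_E_smul hs hF (add_mem_Ef hs hF h₁b h₂b),
          trFE_E_smul hs hF (add_mem_Ef hs hF h₁c h₂c),
          (hHxmem θ).mp hθHx, (hHxmem θ').mp hθ'Hx] at happ
        simp only [mul_zero, zero_add, add_zero] at happ
        rcases mul_eq_zero.mp happ with h | h
        · exact h
        · exact absurd h htr
      rw [hdc, add_zero] at hd
      have h12 := hindep _ _ (add_mem_Ef hs hF h₁a h₂a) (add_mem_Ef hs hF h₁b h₂b) hd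
      have e1 : t₁.1 = t₂.1 := by
        linear_combination h12.1 - addself hs hF t₂.1
      have e2 : t₁.2.1 = t₂.2.1 := by
        linear_combination h12.2 - addself hs hF t₂.2.1
      have e3 : t₁.2.2 = t₂.2.2 := by
        linear_combination hdc - addself hs hF t₂.2.2
      exact Prod.ext e1 (Prod.ext e2 e3)
    have hm3surj : ∀ v : F, ∃ t ∈ (Ef s F) ×ˢ (Ef s F) ×ˢ (Ef s F),
        v = t.1 * θ + t.2.1 * θ' + t.2.2 := by
      intro v
      have hcards : (Finset.univ : Finset F).card ≤ ((Ef s F) ×ˢ (Ef s F) ×ˢ (Ef s F)).card := by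
        rw [Finset.card_product, Finset.card_product, card_Ef hs hF hω, Finset.card_univ, hF]
        rw [← pow_add, ← pow_add]
        apply Nat.pow_le_pow_right (by norm_num)
        omega
      have := Finset.surj_on_of_inj_on_of_card_le
        (s := (Ef s F) ×ˢ (Ef s F) ×ˢ (Ef s F)) (t := (Finset.univ : Finset F))
        (fun t _ => t.1 * θ + t.2.1 * θ' + t.2.2)
        (fun t _ => Finset.mem_univ _)
        (fun t₁ t₂ h₁ h₂ he => hm3inj t₁ h₁ t₂ h₂ he)
        hcards v (Finset.mem_univ v)
      obtain ⟨t, ht, hte⟩ := this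
      exact ⟨t, ht, hte⟩
    -- B(θ, v) = 0 for all v
    have hBv : ∀ v : F, Bf s θ v = 0 := by
      intro v
      obtain ⟨t, ht, rfl⟩ := hm3surj v
      rw [Finset.mem_product] at ht
      rw [Finset.mem_product] at ht
      rw [Bf_add_right hs hF, Bf_add_right hs hF]
      rw [Bf_E_scale_right hs hF ht.1, Bf_E_scale_right hs hF ht.2.1]
      rw [Bf_self hs hF, ← hcdef, hc0, Bf_E_right hs hF θ ht.2.2]
      ring
    have hθE : θ ∈ Ef s F := by
      have hz : θ ^ 2 ^ s + θ ^ 2 ^ (2 * s) = 0 := by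
        apply Tr_nondeg hs hF
        intro v
        rw [← Bf_eq hs hF]
        exact hBv v
      have he : θ ^ 2 ^ s = θ ^ 2 ^ (2 * s) := eq_of_add_eq_zero' hs hF hz
      apply mem_Ef_of_q2_fixed hs hF
      have := congrArg (fun z : F => z ^ 2 ^ s) he
      rw [powA hs hF, pow22s hs hF] at this
      exact this
    exact hθ0 (hEHx θ hθE hθHx)
  -- value of Q on the plane
  have hQm : ∀ lam mu : F, lam ∈ Ef s F → mu ∈ Ef s F →
      Qf s (lam * θ + mu * θ') = a * lam ^ 2 + c * (lam * mu) + b * mu ^ 2 := by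
    intro lam mu hl hm
    rw [Qf_add hs hF, Qf_E_scale hs hF hl, Qf_E_scale hs hF hm,
      Bf_E_scale_left hs hF hl, Bf_E_scale_right hs hF hm, ← hadef, ← hbdef, ← hcdef]
    ring
  -- the plane zero set
  set Zp : Finset (F × F) := ((Ef s F) ×ˢ (Ef s F)).filter
    (fun p => a * p.1 ^ 2 + c * (p.1 * p.2) + b * p.2 ^ 2 = 0) with hZpdef
  set W : Finset F := Hx.filter (fun u => Qf s u = 0) with hWdef
  have hmsurj : ∀ u ∈ Hx, ∃ p ∈ (Ef s F) ×ˢ (Ef s F), u = p.1 * θ + p.2 * θ' := by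
    have hcards : Hx.card ≤ ((Ef s F) ×ˢ (Ef s F)).card := by
      rw [Finset.card_product, card_Ef hs hF hω, hcardHx, ← pow_add, two_mul]
    have hmaps : ∀ p : F × F, p ∈ (Ef s F) ×ˢ (Ef s F) → p.1 * θ + p.2 * θ' ∈ Hx := by
      intro p hp
      rw [Finset.mem_product] at hp
      rw [hHxmem, mul_add]
      have e1 : x * (p.1 * θ) = p.1 * (x * θ) := by ring
      have e2 : x * (p.2 * θ') = p.2 * (x * θ') := by ring
      rw [trFE_add hs hF, e1, e2, trFE_E_smul hs hF hp.1, trFE_E_smul hs hF hp.2,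
        (hHxmem θ).mp hθHx, (hHxmem θ').mp hθ'Hx]
      ring
    have hinj2 : ∀ p₁ ∈ (Ef s F) ×ˢ (Ef s F), ∀ p₂ ∈ (Ef s F) ×ˢ (Ef s F),
        (p₁.1 * θ + p₁.2 * θ' : F) = p₂.1 * θ + p₂.2 * θ' → p₁ = p₂ := by
      intro p₁ h₁ p₂ h₂ he
      rw [Finset.mem_product] at h₁ h₂
      have hd : (p₁.1 + p₂.1) * θ + (p₁.2 + p₂.2) * θ' = 0 := by
        linear_combination he + addself hs hF (p₂.1 * θ + p₂.2 * θ')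
      have h12 := hindep _ _ (add_mem_Ef hs hF h₁.1 h₂.1) (add_mem_Ef hs hF h₁.2 h₂.2) hd
      have e1 : p₁.1 = p₂.1 := by
        linear_combination h12.1 - addself hs hF p₂.1
      have e2 : p₁.2 = p₂.2 := by
        linear_combination h12.2 - addself hs hF p₂.2
      exact Prod.ext e1 e2
    intro u hu
    have := Finset.surj_on_of_inj_on_of_card_le
      (s := (Ef s F) ×ˢ (Ef s F)) (t := Hx)
      (fun p _ => p.1 * θ + p.2 * θ')
      (fun p hp => hmaps p hp)
      (fun p₁ p₂ h₁ h₂ he => hinj2 p₁ h₁ p₂ h₂ he)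
      hcards u hu
    obtain ⟨p, hp, hpe⟩ := this
    exact ⟨p, hp, hpe⟩
  have hWZp : W.card = Zp.card := by
    symm
    apply Finset.card_bij (i := fun p _ => p.1 * θ + p.2 * θ')
    · intro p hp
      rw [hZpdef, Finset.mem_filter] at hp
      obtain ⟨hp1, hp2⟩ := hp
      rw [Finset.mem_product] at hp1
      rw [hWdef, Finset.mem_filter]
      constructor
      · rw [hHxmem, mul_add]
        have e1 : x * (p.1 * θ) = p.1 * (x * θ) := by ring
        have e2 : x * (p.2 * θ') = p.2 * (x * θ') := by ring
        rw [trFE_add hs hF, e1, e2, trFE_E_smul hs hF hp1.1, trFE_E_smul hs hF hp1.2,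
          (hHxmem θ).mp hθHx, (hHxmem θ').mp hθ'Hx]
        ring
      · rw [hQm p.1 p.2 hp1.1 hp1.2]
        exact hp2
    · intro p₁ h₁ p₂ h₂ he
      rw [hZpdef, Finset.mem_filter] at h₁ h₂
      obtain ⟨h₁, _⟩ := h₁
      obtain ⟨h₂, _⟩ := h₂
      rw [Finset.mem_product] at h₁ h₂
      have hd : (p₁.1 + p₂.1) * θ + (p₁.2 + p₂.2) * θ' = 0 := by
        linear_combination he + addself hs hF (p₂.1 * θ + p₂.2 * θ')
      have h12 := hindep _ _ (add_mem_Ef hs hF h₁.1 h₂.1) (add_mem_Ef hs hF h₁.2 h₂.2) hd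
      have e1 : p₁.1 = p₂.1 := by
        linear_combination h12.1 - addself hs hF p₂.1
      have e2 : p₁.2 = p₂.2 := by
        linear_combination h12.2 - addself hs hF p₂.2
      exact Prod.ext e1 e2
    · intro u hu
      rw [hWdef, Finset.mem_filter] at hu
      obtain ⟨p, hp, hpe⟩ := hmsurj u hu.1
      rw [Finset.mem_product] at hp
      refine ⟨p, ?_, hpe.symm⟩
      rw [hZpdef, Finset.mem_filter]
      refine ⟨Finset.mem_product.mpr hp, ?_⟩
      rw [← hQm p.1 p.2 hp.1 hp.2, ← hpe]
      exact hu.2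
  -- root set of the dehomogenized quadratic
  set T : Finset F := (Ef s F).filter (fun t => a * t ^ 2 + c * t + b = 0) with hTdef
  -- count of zeros with second coordinate nonzero
  have hS1 : (Zp.filter (fun p => p.2 ≠ 0)).card = T.card * (2 ^ s - 1) := by
    have := Finset.card_nbij' (s := T ×ˢ ((Ef s F).erase 0))
      (t := Zp.filter (fun p => p.2 ≠ 0))
      (i := fun q => (q.1 * q.2, q.2)) (j := fun p => (p.1 * p.2⁻¹, p.2)) ?_ ?_ ?_ ?_
    · rw [← this, Finset.card_product, Finset.card_erase_of_mem zero_mem_Ef,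
        card_Ef hs hF hω]
    · intro q hq
      rw [Finset.mem_coe, Finset.mem_product, hTdef, Finset.mem_filter, Finset.mem_erase] at hq
      obtain ⟨⟨hqE, hqeq⟩, hq20, hq2E⟩ := hq
      rw [Finset.mem_coe, Finset.mem_filter, hZpdef, Finset.mem_filter]
      refine ⟨⟨Finset.mem_product.mpr ⟨mul_mem_Ef hqE hq2E, hq2E⟩, ?_⟩, hq20⟩
      simp only
      linear_combination (q.2 ^ 2) * hqeq
    · intro p hp
      rw [Finset.mem_coe, Finset.mem_filter, hZpdef, Finset.mem_filter] at hp
      obtain ⟨⟨hpE, hpeq⟩, hp2⟩ := hp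
      rw [Finset.mem_product] at hpE
      rw [Finset.mem_coe, Finset.mem_product, hTdef, Finset.mem_filter, Finset.mem_erase]
      refine ⟨⟨mul_mem_Ef hpE.1 (inv_mem_Ef hpE.2), ?_⟩, hp2, hpE.2⟩
      have hinv : p.2 * p.2⁻¹ = 1 := mul_inv_cancel₀ hp2
      linear_combination (p.2⁻¹ ^ 2) * hpeq
        - (c * p.1 * p.2⁻¹ + b * (p.2 * p.2⁻¹ + 1)) * hinv
    · intro q hq
      rw [Finset.mem_coe, Finset.mem_product, Finset.mem_erase] at hq
      have hq2 : (q.2 : F) ≠ 0 := hq.2.1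
      simp only
      rw [mul_assoc, mul_inv_cancel₀ hq2, mul_one]
    · intro p hp
      rw [Finset.mem_coe, Finset.mem_filter] at hp
      have hp2 : (p.2 : F) ≠ 0 := hp.2
      simp only
      rw [mul_assoc, inv_mul_cancel₀ hp2, mul_one]
  -- count of zeros with second coordinate zero
  have hS0 : (Zp.filter (fun p => p.2 = 0)).card = if a = 0 then 2 ^ s else 1 := by
    have hbij : (Zp.filter (fun p => p.2 = 0)).card
        = ((Ef s F).filter (fun lam => a * lam ^ 2 = 0)).card := by
      apply Finset.card_nbij' (i := fun p => p.1) (j := fun lam => (lam, 0))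
      · intro p hp
        rw [Finset.mem_coe, Finset.mem_filter, hZpdef, Finset.mem_filter] at hp
        obtain ⟨⟨hpE, hpeq⟩, hp2⟩ := hp
        rw [Finset.mem_product] at hpE
        rw [Finset.mem_coe, Finset.mem_filter]
        refine ⟨hpE.1, ?_⟩
        rw [hp2] at hpeq
        linear_combination hpeq
      · intro lam hl
        rw [Finset.mem_coe, Finset.mem_filter] at hl
        rw [Finset.mem_coe, Finset.mem_filter, hZpdef, Finset.mem_filter]
        refine ⟨⟨Finset.mem_product.mpr ⟨hl.1, zero_mem_Ef⟩, ?_⟩, rfl⟩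
        simp only
        linear_combination hl.2
      · intro p hp
        rw [Finset.mem_coe, Finset.mem_filter] at hp
        exact Prod.ext rfl hp.2.symm
      · intro lam _
        rfl
    rw [hbij]
    split
    case isTrue ha =>
      have : (Ef s F).filter (fun lam => a * lam ^ 2 = 0) = Ef s F := by
        apply Finset.filter_true_of_mem
        intro lam _
        rw [ha, zero_mul]
      rw [this, card_Ef hs hF hω]
    case isFalse ha =>
      have : (Ef s F).filter (fun lam => a * lam ^ 2 = 0) = {0} := by
        ext lam
        rw [Finset.mem_filter, Finset.mem_singleton]
        constructor
        · intro ⟨_, hl⟩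
          rcases mul_eq_zero.mp hl with h | h
          · exact absurd h ha
          · exact pow_eq_zero_iff (by norm_num) |>.mp h
        · intro h
          subst h
          exact ⟨zero_mem_Ef, by ring⟩
      rw [this, Finset.card_singleton]
  -- T card analysis
  have hTcard : (a = 0 ∧ T.card = 1) ∨ (a ≠ 0 ∧ (T.card = 0 ∨ T.card = 2)) := by
    by_cases ha : a = 0
    · left
      refine ⟨ha, ?_⟩
      have : T = {c⁻¹ * b} := by
        ext t
        rw [hTdef, Finset.mem_filter, Finset.mem_singleton]
        constructor
        · intro ⟨htE, hteq⟩
          rw [ha, zero_mul, zero_add] at hteq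
          have : c * t = b := eq_of_add_eq_zero' hs hF hteq
          field_simp
          linear_combination this
        · intro h
          subst h
          refine ⟨mul_mem_Ef (inv_mem_Ef hcE) (Qf_mem_Ef hs hF θ'), ?_⟩
          rw [ha, zero_mul, zero_add]
          have : c * (c⁻¹ * b) = b := by field_simp
          rw [this, addself hs hF]
      rw [this, Finset.card_singleton]
    · right
      refine ⟨ha, ?_⟩
      rcases Finset.eq_empty_or_nonempty T with hT0 | hT1
      · left; rw [hT0, Finset.card_empty]
      · right
        obtain ⟨t₁, ht₁⟩ := hT1
        rw [hTdef, Finset.mem_filter] at ht₁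
        obtain ⟨ht₁E, ht₁eq⟩ := ht₁
        have hca : c * a⁻¹ ≠ 0 := by
          apply mul_ne_zero hc
          exact inv_ne_zero ha
        have hT2 : T = {t₁, t₁ + c * a⁻¹} := by
          ext t
          rw [hTdef, Finset.mem_filter, Finset.mem_insert, Finset.mem_singleton]
          constructor
          · intro ⟨htE, hteq⟩
            by_cases hte : t = t₁
            · exact Or.inl hte
            · right
              have hdiff : a * (t + t₁) ^ 2 + c * (t + t₁) = 0 := by
                have h2 : (t + t₁)^2 = t^2 + t₁^2 := by
                  have := frobadd hs hF t t₁ 1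
                  simpa using this
                rw [h2]
                linear_combination hteq + ht₁eq - addself hs hF b
              have htt1 : t + t₁ ≠ 0 := by
                intro h
                exact hte (by linear_combination h - addself hs hF t₁)
              have hfac : (t + t₁) * (a * (t + t₁) + c) = 0 := by
                linear_combination hdiff
              have := (mul_eq_zero.mp hfac).resolve_left htt1
              have ht2 : a * (t + t₁) = c := eq_of_add_eq_zero' hs hF this
              have : t + t₁ = c * a⁻¹ := by
                field_simp at ht2 ⊢
                linear_combination ht2
              linear_combination this - addself hs hF t₁
          · intro h
            rcases h with h | h
            · subst h; exact ⟨ht₁E, ht₁eq⟩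
            · subst h
              refine ⟨add_mem_Ef hs hF ht₁E (mul_mem_Ef hcE (inv_mem_Ef haE)), ?_⟩
              have h2 : (t₁ + c * a⁻¹)^2 = t₁^2 + (c * a⁻¹)^2 := by
                have := frobadd hs hF t₁ (c * a⁻¹) 1
                simpa using this
              rw [h2]
              have hexp : a * (t₁ ^ 2 + (c * a⁻¹) ^ 2) + c * (t₁ + c * a⁻¹) + b
                  = (a * t₁^2 + c * t₁ + b) + (a * (c*a⁻¹)^2 + c * (c * a⁻¹)) := by
                ring
              rw [hexp, ht₁eq, zero_add]
              have ha' : a⁻¹ * a = 1 := inv_mul_cancel₀ ha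
              have : a * (c*a⁻¹)^2 = c * (c * a⁻¹) := by
                field_simp
              rw [this, addself hs hF]
        rw [hT2, Finset.card_insert_of_notMem, Finset.card_singleton]
        rw [Finset.mem_singleton]
        intro h
        have : c * a⁻¹ = 0 := by linear_combination -h
        exact hca this
  -- assemble
  have hsplitZp : Zp.card = (Zp.filter (fun p => p.2 = 0)).card
      + (Zp.filter (fun p => p.2 ≠ 0)).card := by
    rw [Finset.card_filter_add_card_filter_not]
  have hW1 : W.card = 1 ∨ W.card = 2 * 2 ^ s - 1 := by
    rw [hWZp, hsplitZp, hS0, hS1]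
    rcases hTcard with ⟨ha, h⟩ | ⟨ha, h⟩
    · right
      rw [if_pos ha, h]
      omega
    · rw [if_neg ha]
      rcases h with h | h
      · left; rw [h]; omega
      · right; rw [h]; omega
  -- relate W and SxF
  have h0W : (0:F) ∈ W := by
    rw [hWdef, Finset.mem_filter]
    exact ⟨h0Hx, Qf_zero⟩
  have hSW : SxF s x = W.erase 0 := by
    ext u
    rw [hWdef]
    unfold SxF Qf
    simp only [Finset.mem_filter, Finset.mem_univ, true_and, Finset.mem_erase, hHxmem]
    tauto
  rw [hSW, Finset.card_erase_of_mem h0W]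
  rcases hW1 with h | h
  · left; rw [h]
  · right; rw [h]; omega

end Omega

/-! ### Bridge to the cyclotomic description -/

section Omega
variable (hs : 1 ≤ s) (hF : Fintype.card F = 2 ^ (3 * s))
  {ω : F} (hω : ∀ x : F, x ≠ 0 → ∃ n : ℕ, x = ω ^ n)
include hs hF hω

lemma Mof_pos : 0 < Mof s := by unfold Mof; positivity

lemma M_dvd_Q1 : ((Mof s : ℕ) : ℤ) ∣ ((2 ^ (3 * s) - 1 : ℕ) : ℤ) := by
  refine ⟨((2 ^ s - 1 : ℕ) : ℤ), ?_⟩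
  rw [hQM hs]
  push_cast
  ring

lemma cyc_mem_iff {x : F} {n : ℕ} (hxn : x = ω ^ n) (i : ℤ) :
    x ∈ cyc (Mof s) ω i ↔ ((i : ZMod (Mof s)) = ((n : ℕ) : ZMod (Mof s))) := by
  haveI : NeZero (Mof s) := ⟨(Mof_pos hs hF hω (s := s)).ne'⟩
  constructor
  · rintro ⟨t, ht⟩
    have he : ω ^ ((n : ℤ)) = ω ^ (i + (Mof s : ℤ) * t) := by
      rw [zpow_natCast, ← hxn, ht]
    have hdvd := (zpow_inj_iff hs hF hω _ _).mp he
    have hM : ((Mof s : ℕ) : ℤ) ∣ (n : ℤ) - i := by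
      have h1 : ((Mof s : ℕ) : ℤ) ∣ (n : ℤ) - (i + (Mof s : ℤ) * t) :=
        dvd_trans (M_dvd_Q1 hs hF hω) hdvd
      have h2 : ((Mof s : ℕ) : ℤ) ∣ (Mof s : ℤ) * t := ⟨t, rfl⟩
      have h3 := dvd_add h1 h2
      convert h3 using 1
      · rfl
      · ring
    have : (i : ZMod (Mof s)) = (((n : ℤ)) : ZMod (Mof s)) := by
      rw [ZMod.intCast_eq_intCast_iff]
      exact Int.modEq_iff_dvd.mpr hM
    simpa using this
  · intro h
    have h' : (i : ZMod (Mof s)) = (((n : ℤ)) : ZMod (Mof s)) := by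
      push_cast
      exact h
    rw [ZMod.intCast_eq_intCast_iff] at h'
    have hM : ((Mof s : ℕ) : ℤ) ∣ (n : ℤ) - i := Int.modEq_iff_dvd.mp h'
    obtain ⟨t, ht⟩ := hM
    refine ⟨t, ?_⟩
    have : i + (Mof s : ℤ) * t = (n : ℤ) := by rw [← ht]; ring
    rw [this, zpow_natCast, hxn]

lemma mem_Rclass_iff (T : Set (ZMod (Mof s))) {x : F} {n : ℕ} (hxn : x = ω ^ n) :
    x ∈ Rclass s ω T ↔ ((n : ℕ) : ZMod (Mof s)) ∈ T := by
  haveI : NeZero (Mof s) := ⟨(Mof_pos hs hF hω (s := s)).ne'⟩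
  unfold Rclass
  simp only [Set.mem_iUnion]
  constructor
  · rintro ⟨i, hiT, hcyc⟩
    have hc := (cyc_mem_iff hs hF hω hxn _).mp hcyc
    have hival : ((i.val : ℤ) : ZMod (Mof s)) = i := by
      push_cast
      rw [ZMod.natCast_val, ZMod.cast_id]
    rw [hival] at hc
    rwa [← hc]
  · intro hT
    refine ⟨((n : ℕ) : ZMod (Mof s)), hT, ?_⟩
    rw [cyc_mem_iff hs hF hω hxn]
    push_cast
    rw [ZMod.natCast_val, ZMod.cast_id]

lemma Sa_ncard_eq {n : ℕ} (a : ℤ) (ha : ((a : ℤ) : ZMod (Mof s)) = ((n : ℕ) : ZMod (Mof s))) :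
    (Sa s ω a).ncard = (SxF s (ω ^ n)).card := by
  haveI : NeZero (Mof s) := ⟨(Mof_pos hs hF hω (s := s)).ne'⟩
  have hω0 := omega_ne_zero hs hF hω
  set lam : F := ω ^ (a - (n : ℤ)) with hlam
  have hlam0 : lam ≠ 0 := zpow_ne_zero _ hω0
  have hMdvd : ((Mof s : ℕ) : ℤ) ∣ a - (n : ℤ) := by
    have h' : ((a : ℤ) : ZMod (Mof s)) = (((n : ℤ)) : ZMod (Mof s)) := by
      push_cast
      exact ha
    rw [ZMod.intCast_eq_intCast_iff] at h'
    have h2 : ((Mof s : ℕ) : ℤ) ∣ (n : ℤ) - a := Int.modEq_iff_dvd.mp h'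
    have h3 : a - (n : ℤ) = -((n : ℤ) - a) := by ring
    rw [h3, dvd_neg]
    exact h2
  obtain ⟨k, hk⟩ := hMdvd
  have hQ1 : ((2 ^ (3 * s) - 1 : ℕ) : ℤ) = ((2 ^ s - 1 : ℕ) : ℤ) * (Mof s : ℤ) := by
    rw [hQM hs]
    push_cast
    ring
  have hlamE : lam ∈ Ef s F := by
    rw [mem_Ef, hlam, ← zpow_natCast (ω ^ (a - (n:ℤ))) (2 ^ s), ← zpow_mul]
    apply (zpow_inj_iff hs hF hω _ _).mpr
    have hc : ((2 ^ s : ℕ) : ℤ) = ((2 ^ s - 1 : ℕ) : ℤ) + 1 := by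
      have h1 : 1 ≤ 2 ^ s := Nat.one_le_two_pow
      push_cast [Nat.cast_sub h1]
      ring
    refine ⟨k, ?_⟩
    rw [hQ1, hk, hc]
    ring
  have hωa : ∀ u : F, ω ^ a * u = ω ^ (n : ℕ) * (lam * u) := by
    intro u
    rw [hlam, ← mul_assoc]
    congr 1
    rw [← zpow_natCast ω n, ← zpow_add₀ hω0]
    congr 1
    ring
  have him : Sa s ω a = (fun u : F => lam⁻¹ * u) '' (↑(SxF s (ω ^ n)) : Set F) := by
    ext u
    simp only [Sa, Set.mem_setOf_eq, Set.mem_image, Finset.mem_coe]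
    constructor
    · rintro ⟨hu0, huQ, huT⟩
      refine ⟨lam * u, ?_, by rw [← mul_assoc, inv_mul_cancel₀ hlam0, one_mul]⟩
      unfold SxF
      rw [Finset.mem_filter]
      refine ⟨Finset.mem_univ _, mul_ne_zero hlam0 hu0, ?_, ?_⟩
      · show Qf s (lam * u) = 0
        rw [Qf_E_scale hs hF hlamE]
        show lam ^ 2 * Qf s u = 0
        show lam ^ 2 * trFE s (u ^ (2 ^ s + 1)) = 0
        rw [huQ, mul_zero]
      · rw [← hωa]
        exact huT
    · rintro ⟨v, hv, rfl⟩
      unfold SxF at hv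
      rw [Finset.mem_filter] at hv
      obtain ⟨-, hv0, hvQ, hvT⟩ := hv
      refine ⟨mul_ne_zero (inv_ne_zero hlam0) hv0, ?_, ?_⟩
      · have hinvE : lam⁻¹ ∈ Ef s F := inv_mem_Ef hlamE
        show Qf s (lam⁻¹ * v) = 0
        rw [Qf_E_scale hs hF hinvE]
        show lam⁻¹ ^ 2 * trFE s (v ^ (2 ^ s + 1)) = 0
        rw [hvQ, mul_zero]
      · have hv2 : lam * (lam⁻¹ * v) = v := by
          rw [← mul_assoc, mul_inv_cancel₀ hlam0, one_mul]
        rw [hωa (lam⁻¹ * v), hv2]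
        exact hvT
  rw [him, Set.ncard_image_of_injective _ (mul_right_injective₀ (inv_ne_zero hlam0)),
    Set.ncard_coe_finset]

end Omega

/-! ### The classes as finsets -/

def R1f (s : ℕ) (F : Type*) [Field F] [Fintype F] : Finset F :=
  Finset.univ.filter (fun x => x ≠ 0 ∧ trFE s x = 0)

def R2f (s : ℕ) (F : Type*) [Field F] [Fintype F] : Finset F :=
  Finset.univ.filter (fun x => x ≠ 0 ∧ trFE s x ≠ 0 ∧ (SxF s x).card ≠ 0)

def R3f (s : ℕ) (F : Type*) [Field F] [Fintype F] : Finset F :=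
  Finset.univ.filter (fun x => x ≠ 0 ∧ trFE s x ≠ 0 ∧ (SxF s x).card = 0)

def Rfin (s : ℕ) (F : Type*) [Field F] [Fintype F] : Fin 4 → Finset F :=
  ![{0}, R1f s F, R2f s F, R3f s F]

section Omega
variable (hs : 1 ≤ s) (hF : Fintype.card F = 2 ^ (3 * s))
  {ω : F} (hω : ∀ x : F, x ≠ 0 → ∃ n : ℕ, x = ω ^ n)
include hs hF hω

lemma mem_RfamK_iff {x : F} {n : ℕ} (hxn : x = ω ^ n) (v : ℕ)
    (T : Set (ZMod (Mof s))) (hT : ∀ y : ZMod (Mof s), y ∈ T ↔ (Sa s ω (y.val : ℤ)).ncard = v) :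
    x ∈ Rclass s ω T ↔ (SxF s x).card = v := by
  haveI : NeZero (Mof s) := ⟨(Mof_pos hs hF hω (s := s)).ne'⟩
  rw [mem_Rclass_iff hs hF hω T hxn, hT]
  have ha : (((((n : ℕ) : ZMod (Mof s)).val : ℕ) : ℤ) : ZMod (Mof s))
      = ((n : ℕ) : ZMod (Mof s)) := by
    push_cast
    rw [ZMod.natCast_val, ZMod.cast_id]
  rw [Sa_ncard_eq hs hF hω _ ha, ← hxn]

lemma mem_Rfam1_iff {x : F} {n : ℕ} (hxn : x = ω ^ n) :
    x ∈ Rfam s ω ω 1 ↔ (SxF s x).card = 2 ^ s - 1 := by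
  have h1 : Rfam s ω ω 1 = Rclass s ω (T1 s ω) := by
    simp [Rfam]
  rw [h1]
  exact mem_RfamK_iff hs hF hω hxn _ _ (fun y => Iff.rfl)

lemma mem_Rfam2_iff {x : F} {n : ℕ} (hxn : x = ω ^ n) :
    x ∈ Rfam s ω ω 2 ↔ (SxF s x).card = 2 * (2 ^ s - 1) := by
  have h1 : Rfam s ω ω 2 = Rclass s ω (T2 s ω) := by
    simp [Rfam]
  rw [h1]
  exact mem_RfamK_iff hs hF hω hxn _ _ (fun y => Iff.rfl)

lemma mem_Rfam3_iff {x : F} {n : ℕ} (hxn : x = ω ^ n) :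
    x ∈ Rfam s ω ω 3 ↔ (SxF s x).card = 0 := by
  have h1 : Rfam s ω ω 3 = Rclass s ω (T3 s ω) := by
    simp [Rfam]
  rw [h1]
  exact mem_RfamK_iff hs hF hω hxn _ _ (fun y => Iff.rfl)

lemma zero_not_mem_Rclass (T : Set (ZMod (Mof s))) : (0 : F) ∉ Rclass s ω T := by
  intro h
  unfold Rclass at h
  rw [Set.mem_iUnion] at h
  obtain ⟨i, hi⟩ := h
  rw [Set.mem_iUnion] at hi
  obtain ⟨-, t, ht⟩ := hi
  exact zpow_ne_zero _ (omega_ne_zero hs hF hω) ht.symm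

lemma hq2' : 2 ≤ 2 ^ s := by
  calc (2:ℕ) = 2 ^ 1 := (pow_one 2).symm
  _ ≤ 2 ^ s := Nat.pow_le_pow_right (by norm_num) hs

omit hω in
lemma hq2 : 2 ≤ 2 ^ s := by
  calc (2:ℕ) = 2 ^ 1 := (pow_one 2).symm
  _ ≤ 2 ^ s := Nat.pow_le_pow_right (by norm_num) hs

/-- the main set identification -/
lemma Rfam_eq_Rfin : ∀ k : Fin 4, Rfam s ω ω k = (↑(Rfin s F k) : Set F) := by
  have hq := hq2 (F := F) hs hF
  intro k
  ext x
  rcases eq_or_ne x 0 with rfl | hx0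
  · fin_cases k
    · simp [Rfam, Rfin]
    · simp only [Rfam, Rfin]
      constructor
      · intro h
        exact absurd (by simpa using h) (zero_not_mem_Rclass hs hF hω _)
      · intro h
        simp only [Finset.coe_filter, Matrix.cons_val_one, Matrix.head_cons, R1f,
          Set.mem_setOf_eq] at h
        simp at h
    · simp only [Rfam, Rfin]
      constructor
      · intro h
        exact absurd (by simpa using h) (zero_not_mem_Rclass hs hF hω _)
      · intro h
        simp only [Matrix.cons_val_two, Matrix.tail_cons, Matrix.head_cons, R2f] at h
        simp at h
    · simp only [Rfam, Rfin]
      constructor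
      · intro h
        exact absurd (by simpa using h) (zero_not_mem_Rclass hs hF hω _)
      · intro h
        simp only [Matrix.cons_val_three, Matrix.tail_cons, Matrix.head_cons, R3f] at h
        simp at h
  · obtain ⟨n, hxn⟩ := hω x hx0
    have hcases : (trFE s x = 0 ∧ (SxF s x).card = 2 ^ s - 1)
        ∨ (trFE s x ≠ 0 ∧ ((SxF s x).card = 0 ∨ (SxF s x).card = 2 * (2 ^ s - 1))) := by
      rcases eq_or_ne (trFE s x) 0 with h | h
      · exact Or.inl ⟨h, card_SxF_tr_zero hs hF hω hx0 h⟩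
      · exact Or.inr ⟨h, card_SxF_tr_ne hs hF hω h⟩
    fin_cases k
    · simp only [Rfam, Rfin, Matrix.cons_val_zero]
      simp [hx0]
    · show x ∈ Rfam s ω ω 1 ↔ x ∈ (↑(Rfin s F 1) : Set F)
      rw [mem_Rfam1_iff hs hF hω hxn]
      simp only [Rfin, Matrix.cons_val_one, Matrix.cons_val_zero, Matrix.head_cons, R1f, Finset.coe_filter,
        Set.mem_setOf_eq, Finset.mem_univ, true_and]
      constructor
      · intro h
        refine ⟨hx0, ?_⟩
        rcases hcases with ⟨ht, _⟩ | ⟨ht, hc⟩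
        · exact ht
        · exfalso
          rcases hc with hc | hc <;> omega
      · rintro ⟨-, ht⟩
        rcases hcases with ⟨-, hc⟩ | ⟨ht', -⟩
        · exact hc
        · exact absurd ht ht'
    · show x ∈ Rfam s ω ω 2 ↔ x ∈ (↑(Rfin s F 2) : Set F)
      rw [mem_Rfam2_iff hs hF hω hxn]
      simp only [Rfin, Matrix.cons_val_two, Matrix.tail_cons, Matrix.head_cons, R2f,
        Finset.coe_filter, Set.mem_setOf_eq, Finset.mem_univ, true_and]
      constructor
      · intro h
        refine ⟨hx0, ?_, by omega⟩
        rcases hcases with ⟨-, hc⟩ | ⟨ht, -⟩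
        · omega
        · exact ht
      · rintro ⟨-, ht, hc⟩
        rcases hcases with ⟨ht', -⟩ | ⟨-, hc'⟩
        · exact absurd ht' ht
        · omega
    · show x ∈ Rfam s ω ω 3 ↔ x ∈ (↑(Rfin s F 3) : Set F)
      rw [mem_Rfam3_iff hs hF hω hxn]
      simp only [Rfin, Matrix.cons_val_three, Matrix.tail_cons, Matrix.head_cons, R3f,
        Finset.coe_filter, Set.mem_setOf_eq, Finset.mem_univ, true_and]
      constructor
      · intro h
        refine ⟨hx0, ?_, h⟩
        rcases hcases with ⟨-, hc⟩ | ⟨ht, -⟩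
        · omega
        · exact ht
      · rintro ⟨-, -, hc⟩
        exact hc

/-- part 1: partition -/
lemma part1 : ∀ x : F, ∃! k : Fin 4, x ∈ Rfam s ω ω k := by
  have hq := hq2 (F := F) hs hF
  intro x
  have hR := Rfam_eq_Rfin hs hF hω
  have hmem : ∀ k : Fin 4, x ∈ Rfam s ω ω k ↔ x ∈ Rfin s F k := by
    intro k
    rw [hR k]
    exact Finset.mem_coe
  rcases eq_or_ne x 0 with rfl | hx0
  · refine ⟨0, ?_, ?_⟩
    · refine (hmem 0).mpr ?_
      simp [Rfin]
    · intro k hk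
      rw [hmem] at hk
      fin_cases k
      · rfl
      all_goals (exfalso; revert hk; simp [Rfin, R1f, R2f, R3f])
  · have hcases : (trFE s x = 0 ∧ (SxF s x).card = 2 ^ s - 1)
        ∨ (trFE s x ≠ 0 ∧ ((SxF s x).card = 0 ∨ (SxF s x).card = 2 * (2 ^ s - 1))) := by
      rcases eq_or_ne (trFE s x) 0 with h | h
      · exact Or.inl ⟨h, card_SxF_tr_zero hs hF hω hx0 h⟩
      · exact Or.inr ⟨h, card_SxF_tr_ne hs hF hω h⟩
    rcases hcases with ⟨ht, hc⟩ | ⟨ht, hc⟩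
    · refine ⟨1, ?_, ?_⟩
      · refine (hmem 1).mpr ?_
        simp [Rfin, R1f, hx0, ht]
      · intro k hk
        rw [hmem] at hk
        fin_cases k
        · exfalso; revert hk; simp [Rfin, hx0]
        · rfl
        · exfalso; revert hk; simp [Rfin, R2f, ht]
        · exfalso; revert hk; simp [Rfin, R3f, ht]
    · rcases hc with hc | hc
      · refine ⟨3, ?_, ?_⟩
        · refine (hmem 3).mpr ?_
          simp [Rfin, R3f, hx0, ht, Finset.card_eq_zero.mp hc]
        · intro k hk
          rw [hmem] at hk
          fin_cases k
          · exfalso; revert hk; simp [Rfin, hx0]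
          · exfalso; revert hk; simp [Rfin, R1f, ht]
          · exfalso
            have hce : SxF s x = ∅ := Finset.card_eq_zero.mp hc
            revert hk; simp [Rfin, R2f, ht, hce]
          · rfl
      · refine ⟨2, ?_, ?_⟩
        · refine (hmem 2).mpr ?_
          have hne : SxF s x ≠ ∅ := by
            intro h
            rw [h, Finset.card_empty] at hc
            omega
          simp [Rfin, R2f, hx0, ht, hne]
        · intro k hk
          rw [hmem] at hk
          fin_cases k
          · exfalso; revert hk; simp [Rfin, hx0]
          · exfalso; revert hk; simp [Rfin, R1f, ht]
          · rfl
          · exfalso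
            have hk' : x ∈ R3f s F := by simpa [Rfin] using hk
            rw [R3f, Finset.mem_filter] at hk'
            have h0 := hk'.2.2.2
            omega

end Omega

/-! ### Character sums -/

def psiS (s : ℕ) {F : Type*} [Field F] [Fintype F] (c : F) (S : Finset F) : ℤ :=
  ∑ x ∈ S, psi0 s (c * x)

def Hf (s : ℕ) (F : Type*) [Field F] [Fintype F] : Finset F :=
  Finset.univ.filter (fun x => trFE s x = 0)

def I0 {F : Type*} [Field F] [Fintype F] (c : F) : ℤ := if c = 0 then 1 else 0

def IEe (s : ℕ) {F : Type*} [Field F] [Fintype F] (c : F) : ℤ :=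
  if c ∈ (Ef s F).erase 0 then 1 else 0

def IZe (s : ℕ) {F : Type*} [Field F] [Fintype F] (c : F) : ℤ :=
  if c ∈ Zf s F then 1 else 0

section Omega
variable (hs : 1 ≤ s) (hF : Fintype.card F = 2 ^ (3 * s))
  {ω : F} (hω : ∀ x : F, x ≠ 0 → ∃ n : ℕ, x = ω ^ n)
include hs hF hω

omit hω in
lemma SxF_as_filter (x : F) : SxF s x = (Zf s F).filter (fun u => trFE s (x * u) = 0) := by
  ext u
  unfold SxF Zf Qf
  simp only [Finset.mem_filter, Finset.mem_univ, true_and]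
  tauto

omit hω in
lemma Zf_smul_mem {lam u : F} (hl : lam ∈ Ef s F) (hl0 : lam ≠ 0) (hu : u ∈ Zf s F) :
    lam * u ∈ Zf s F := by
  unfold Zf at *
  simp only [Finset.mem_filter, Finset.mem_univ, true_and] at *
  refine ⟨mul_ne_zero hl0 hu.1, ?_⟩
  rw [Qf_E_scale hs hF hl, hu.2, mul_zero]

lemma chi_identity (x : F) :
    ((2 ^ s : ℕ) : ℤ) * ((SxF s x).card : ℤ)
      = (((2 ^ (2 * s) : ℕ) : ℤ) - 1) + (((2 ^ s : ℕ) : ℤ) - 1) * psiS s x (Zf s F) := by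
  have h1 : ((SxF s x).card : ℤ) = ∑ u ∈ Zf s F, (if trFE s (x * u) = 0 then (1:ℤ) else 0) := by
    rw [SxF_as_filter hs hF x, Finset.card_filter]
    push_cast
    rfl
  have h2 : ((2 ^ s : ℕ) : ℤ) * ((SxF s x).card : ℤ)
      = ∑ u ∈ Zf s F, ∑ lam ∈ Ef s F, psi0 s (lam * (x * u)) := by
    rw [h1, Finset.mul_sum]
    apply Finset.sum_congr rfl
    intro u _
    rw [sum_psi0_Ef hs hF hω (x * u)]
    split <;> simp
  rw [h2, Finset.sum_comm]
  have h0E : (0 : F) ∈ Ef s F := zero_mem_Ef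
  rw [← Finset.add_sum_erase _ _ h0E]
  have h3 : ∑ u ∈ Zf s F, psi0 s ((0 : F) * (x * u)) = ((Zf s F).card : ℤ) := by
    rw [Finset.sum_congr rfl (fun u _ => by rw [zero_mul, psi0_zero])]
    simp
  have h4 : ∀ lam ∈ (Ef s F).erase 0, ∑ u ∈ Zf s F, psi0 s (lam * (x * u))
      = psiS s x (Zf s F) := by
    intro lam hlam
    rw [Finset.mem_erase] at hlam
    obtain ⟨hl0, hlE⟩ := hlam
    unfold psiS
    apply Finset.sum_nbij' (i := fun u => lam * u) (j := fun u => lam⁻¹ * u)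
    · intro u hu; exact Zf_smul_mem hs hF hlE hl0 hu
    · intro u hu; exact Zf_smul_mem hs hF (inv_mem_Ef hlE) (inv_ne_zero hl0) hu
    · intro u _; rw [← mul_assoc, inv_mul_cancel₀ hl0, one_mul]
    · intro u _; rw [← mul_assoc, mul_inv_cancel₀ hl0, one_mul]
    · intro u _; congr 1; ring
  rw [Finset.sum_congr rfl h4, h3, card_Zf hs hF hω, Finset.sum_const,
    Finset.card_erase_of_mem h0E, card_Ef hs hF hω]
  have hc1 : ((2 ^ (2 * s) - 1 : ℕ) : ℤ) = ((2 ^ (2 * s) : ℕ) : ℤ) - 1 := by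
    have : 1 ≤ 2 ^ (2 * s) := Nat.one_le_two_pow
    push_cast [Nat.cast_sub this]
    ring
  have hc2 : ((2 ^ s - 1 : ℕ) : ℤ) = ((2 ^ s : ℕ) : ℤ) - 1 := by
    have : 1 ≤ 2 ^ s := Nat.one_le_two_pow
    push_cast [Nat.cast_sub this]
    ring
  rw [nsmul_eq_mul, hc1, hc2]

lemma chi_val_1 {x : F} (hc : (SxF s x).card = 2 ^ s - 1) : psiS s x (Zf s F) = -1 := by
  have hq := hq2 (F := F) hs hF
  have h := chi_identity hs hF hω x
  rw [hc] at h
  have hc2 : ((2 ^ s - 1 : ℕ) : ℤ) = ((2 ^ s : ℕ) : ℤ) - 1 := by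
    push_cast [Nat.cast_sub (by omega : 1 ≤ 2 ^ s)]; ring
  have hc3 : ((2 ^ (2 * s) : ℕ) : ℤ) = ((2 ^ s : ℕ) : ℤ) * ((2 ^ s : ℕ) : ℤ) := by
    push_cast
    rw [← pow_add, two_mul]
  rw [hc2, hc3] at h
  have hne : ((2 ^ s : ℕ) : ℤ) - 1 ≠ 0 := by
    have : (2 : ℤ) ≤ ((2 ^ s : ℕ) : ℤ) := by exact_mod_cast hq
    omega
  apply mul_left_cancel₀ hne
  linear_combination -h

lemma chi_val_2 {x : F} (hc : (SxF s x).card = 2 * (2 ^ s - 1)) :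
    psiS s x (Zf s F) = ((2 ^ s : ℕ) : ℤ) - 1 := by
  have hq := hq2 (F := F) hs hF
  have h := chi_identity hs hF hω x
  rw [hc] at h
  have hc2 : ((2 * (2 ^ s - 1) : ℕ) : ℤ) = 2 * (((2 ^ s : ℕ) : ℤ) - 1) := by
    push_cast [Nat.cast_sub (by omega : 1 ≤ 2 ^ s)]; ring
  have hc3 : ((2 ^ (2 * s) : ℕ) : ℤ) = ((2 ^ s : ℕ) : ℤ) * ((2 ^ s : ℕ) : ℤ) := by
    push_cast
    rw [← pow_add, two_mul]
  rw [hc2, hc3] at h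
  have hne : ((2 ^ s : ℕ) : ℤ) - 1 ≠ 0 := by
    have : (2 : ℤ) ≤ ((2 ^ s : ℕ) : ℤ) := by exact_mod_cast hq
    omega
  apply mul_left_cancel₀ hne
  linear_combination -h

lemma chi_val_3 {x : F} (hc : (SxF s x).card = 0) :
    psiS s x (Zf s F) = -(((2 ^ s : ℕ) : ℤ) + 1) := by
  have hq := hq2 (F := F) hs hF
  have h := chi_identity hs hF hω x
  rw [hc] at h
  have hc3 : ((2 ^ (2 * s) : ℕ) : ℤ) = ((2 ^ s : ℕ) : ℤ) * ((2 ^ s : ℕ) : ℤ) := by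
    push_cast
    rw [← pow_add, two_mul]
  rw [hc3] at h
  have hne : ((2 ^ s : ℕ) : ℤ) - 1 ≠ 0 := by
    have : (2 : ℤ) ≤ ((2 ^ s : ℕ) : ℤ) := by exact_mod_cast hq
    omega
  apply mul_left_cancel₀ hne
  linear_combination -h

lemma card_Hf : (Hf s F).card = 2 ^ (2 * s) := by
  have h := card_Hx hs hF hω (one_ne_zero (α := F))
  have he : Finset.univ.filter (fun u : F => trFE s (1 * u) = 0) = Hf s F := by
    apply Finset.filter_congr
    intro u _
    rw [one_mul]
  rwa [he] at h

lemma sum_psi0_Hf (c : F) :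
    ∑ x ∈ Hf s F, psi0 s (c * x) = if c ∈ Ef s F then ((2 ^ (2 * s) : ℕ) : ℤ) else 0 := by
  have hadd : ∀ a ∈ Hf s F, ∀ b ∈ Hf s F, a + b ∈ Hf s F := by
    intro a ha b hb
    unfold Hf at *
    simp only [Finset.mem_filter, Finset.mem_univ, true_and] at *
    rw [trFE_add hs hF, ha, hb, add_zero]
  rw [sum_psi0_sub hs hF (Hf s F) hadd c, card_Hf hs hF hω]
  congr 1
  simp only [eq_iff_iff]
  constructor
  · intro hall
    by_contra hcE
    have hb : c ^ 2 ^ (2 * s) + c ≠ 0 := by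
      intro h0
      exact hcE (mem_Ef_of_q2_fixed hs hF (eq_of_add_eq_zero' hs hF h0))
    obtain ⟨v, hv⟩ := exists_tr0_ne hs hF
    set w : F := (c ^ 2 ^ (2 * s) + c)⁻¹ * v with hw
    have hbw : tr0 s ((c ^ 2 ^ (2 * s) + c) * w) ≠ 0 := by
      rw [hw, ← mul_assoc, mul_inv_cancel₀ hb, one_mul]
      exact hv
    set x₀ : F := w ^ 2 ^ s + w with hx₀
    have hx₀H : x₀ ∈ Hf s F := by
      unfold Hf
      simp only [Finset.mem_filter, Finset.mem_univ, true_and]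
      rw [hx₀, trFE_add hs hF, trFE_frob hs hF, addself hs hF]
    have hcx₀ : tr0 s (c * x₀) ≠ 0 := by
      have e1 : c * x₀ = c * w ^ 2 ^ s + c * w := by rw [hx₀]; ring
      rw [e1, tr0_add hs hF]
      have e2 : tr0 s (c * w ^ 2 ^ s) = tr0 s (c ^ 2 ^ (2 * s) * w) := by
        rw [← tr0_pow2 hs hF (c * w ^ 2 ^ s) (2 * s)]
        congr 1
        rw [mul_pow, powC hs hF]
      rw [e2, ← tr0_add hs hF]
      have e3 : c ^ 2 ^ (2 * s) * w + c * w = (c ^ 2 ^ (2 * s) + c) * w := by ring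
      rw [e3]
      exact hbw
    exact hcx₀ (hall x₀ hx₀H)
  · intro hcE x hx
    unfold Hf at hx
    simp only [Finset.mem_filter, Finset.mem_univ, true_and] at hx
    apply tr0_of_trFE_zero hs hF
    rw [trFE_E_smul hs hF hcE, hx, mul_zero]

lemma psiS_R1f_eval (c : F) :
    psiS s c (R1f s F) = (if c ∈ Ef s F then ((2 ^ (2 * s) : ℕ) : ℤ) else 0) - 1 := by
  have h0H : (0 : F) ∈ Hf s F := by
    unfold Hf
    simp [trFE_zero]
  have hR1 : R1f s F = (Hf s F).erase 0 := by
    ext x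
    unfold R1f Hf
    simp only [Finset.mem_filter, Finset.mem_univ, true_and, Finset.mem_erase]
  have key := Finset.add_sum_erase (Hf s F) (fun x => psi0 s (c * x)) h0H
  simp only [mul_zero, psi0_zero] at key
  unfold psiS
  rw [hR1, ← sum_psi0_Hf hs hF hω c, ← key]
  ring

end Omega

section Omega
variable (hs : 1 ≤ s) (hF : Fintype.card F = 2 ^ (3 * s))
  {ω : F} (hω : ∀ x : F, x ≠ 0 → ∃ n : ℕ, x = ω ^ n)
include hs hF hω

omit hω in
lemma sum_decomp (f : F → ℤ) :
    ∑ x ∈ Finset.univ.erase (0:F), f x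
      = ∑ x ∈ R1f s F, f x + (∑ x ∈ R2f s F, f x + ∑ x ∈ R3f s F, f x) := by
  have h23 : Disjoint (R2f s F) (R3f s F) := by
    rw [Finset.disjoint_left]
    intro x hx2 hx3
    unfold R2f at hx2
    unfold R3f at hx3
    simp only [Finset.mem_filter, Finset.mem_univ, true_and] at hx2 hx3
    exact hx2.2.2 hx3.2.2
  have h123 : Disjoint (R1f s F) (R2f s F ∪ R3f s F) := by
    rw [Finset.disjoint_left]
    intro x hx1 hx23
    unfold R1f at hx1
    simp only [Finset.mem_filter, Finset.mem_univ, true_and] at hx1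
    rcases Finset.mem_union.mp hx23 with h | h
    · unfold R2f at h
      simp only [Finset.mem_filter, Finset.mem_univ, true_and] at h
      exact h.2.1 hx1.2
    · unfold R3f at h
      simp only [Finset.mem_filter, Finset.mem_univ, true_and] at h
      exact h.2.1 hx1.2
  have hu : Finset.univ.erase (0:F) = R1f s F ∪ (R2f s F ∪ R3f s F) := by
    ext x
    unfold R1f R2f R3f
    simp only [Finset.mem_erase, Finset.mem_univ, and_true, Finset.mem_union,
      Finset.mem_filter, true_and]
    constructor
    · intro hx
      rcases eq_or_ne (trFE s x) 0 with ht | ht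
      · exact Or.inl ⟨hx, ht⟩
      · rcases eq_or_ne ((SxF s x).card) 0 with hc | hc
        · exact Or.inr (Or.inr ⟨hx, ht, hc⟩)
        · exact Or.inr (Or.inl ⟨hx, ht, hc⟩)
    · intro hx
      rcases hx with h | h | h
      · exact h.1
      · exact h.1
      · exact h.1
  rw [hu, Finset.sum_union h123, Finset.sum_union h23]

omit hω in
lemma psi0_erase_sum_y (y : F) :
    ∑ x ∈ Finset.univ.erase (0:F), psi0 s (y * x)
      = (if y = 0 then ((2 ^ (3 * s) : ℕ) : ℤ) else 0) - 1 := by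
  have hO1 : ∑ x : F, psi0 s (y * x) = if y = 0 then ((2 ^ (3 * s) : ℕ) : ℤ) else 0 := by
    rw [Finset.sum_congr rfl (fun x _ => by rw [mul_comm])]
    exact sum_psi0 hs hF y
  have key := Finset.add_sum_erase Finset.univ (fun x => psi0 s (y * x)) (Finset.mem_univ 0)
  simp only [mul_zero, psi0_zero] at key
  rw [← hO1, ← key]
  ring

lemma class_chi_1 {x : F} (hx : x ∈ R1f s F) : psiS s x (Zf s F) = -1 := by
  unfold R1f at hx
  simp only [Finset.mem_filter, Finset.mem_univ, true_and] at hx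
  exact chi_val_1 hs hF hω (card_SxF_tr_zero hs hF hω hx.1 hx.2)

lemma class_chi_2 {x : F} (hx : x ∈ R2f s F) :
    psiS s x (Zf s F) = ((2 ^ s : ℕ) : ℤ) - 1 := by
  unfold R2f at hx
  simp only [Finset.mem_filter, Finset.mem_univ, true_and] at hx
  rcases card_SxF_tr_ne hs hF hω hx.2.1 with h | h
  · exact absurd h hx.2.2
  · exact chi_val_2 hs hF hω h

lemma class_chi_3 {x : F} (hx : x ∈ R3f s F) :
    psiS s x (Zf s F) = -(((2 ^ s : ℕ) : ℤ) + 1) := by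
  unfold R3f at hx
  simp only [Finset.mem_filter, Finset.mem_univ, true_and] at hx
  exact chi_val_3 hs hF hω hx.2.2

lemma diff_identity (c : F) :
    ∑ x ∈ Finset.univ.erase (0:F), psi0 s (c * x) * psiS s x (Zf s F)
      = ((2 ^ (3 * s) : ℕ) : ℤ) * IZe s c - (((2 ^ (2 * s) : ℕ) : ℤ) - 1) := by
  have hstep : ∀ x : F, psi0 s (c * x) * psiS s x (Zf s F)
      = ∑ u ∈ Zf s F, psi0 s ((c + u) * x) := by
    intro x
    unfold psiS
    rw [Finset.mul_sum]
    apply Finset.sum_congr rfl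
    intro u _
    rw [← psi0_mul hs hF]
    congr 1
    ring
  rw [Finset.sum_congr rfl (fun x _ => hstep x), Finset.sum_comm]
  have hinner : ∀ u ∈ Zf s F, ∑ x ∈ Finset.univ.erase (0:F), psi0 s ((c + u) * x)
      = (if u = c then ((2 ^ (3 * s) : ℕ) : ℤ) else 0) - 1 := by
    intro u hu
    rw [psi0_erase_sum_y hs hF (c + u)]
    congr 2
    simp only [eq_iff_iff]
    constructor
    · intro h
      exact (eq_of_add_eq_zero' hs hF h).symm
    · intro h
      rw [h]
      exact addself hs hF c
  rw [Finset.sum_congr rfl hinner, Finset.sum_sub_distrib,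
    Finset.sum_ite_eq' (Zf s F) c (fun _ => ((2 ^ (3 * s) : ℕ) : ℤ)), Finset.sum_const,
    card_Zf hs hF hω]
  have hc1 : ((2 ^ (2 * s) - 1 : ℕ) : ℤ) = ((2 ^ (2 * s) : ℕ) : ℤ) - 1 := by
    push_cast [Nat.cast_sub (Nat.one_le_two_pow : 1 ≤ 2 ^ (2*s))]
    ring
  unfold IZe
  rw [nsmul_eq_mul, hc1]
  split <;> ring

lemma diff_classes (c : F) :
    ∑ x ∈ Finset.univ.erase (0:F), psi0 s (c * x) * psiS s x (Zf s F)
      = -psiS s c (R1f s F) + ((((2 ^ s : ℕ) : ℤ) - 1) * psiS s c (R2f s F)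
        - (((2 ^ s : ℕ) : ℤ) + 1) * psiS s c (R3f s F)) := by
  rw [sum_decomp hs hF (fun x => psi0 s (c * x) * psiS s x (Zf s F))]
  have h1 : ∑ x ∈ R1f s F, psi0 s (c * x) * psiS s x (Zf s F) = -psiS s c (R1f s F) := by
    rw [Finset.sum_congr rfl (fun x hx => by rw [class_chi_1 hs hF hω hx])]
    unfold psiS
    rw [← Finset.sum_neg_distrib]
    apply Finset.sum_congr rfl
    intro x _
    ring
  have h2 : ∑ x ∈ R2f s F, psi0 s (c * x) * psiS s x (Zf s F)
      = (((2 ^ s : ℕ) : ℤ) - 1) * psiS s c (R2f s F) := by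
    rw [Finset.sum_congr rfl (fun x hx => by rw [class_chi_2 hs hF hω hx])]
    unfold psiS
    rw [Finset.mul_sum]
    apply Finset.sum_congr rfl
    intro x _
    ring
  have h3 : ∑ x ∈ R3f s F, psi0 s (c * x) * psiS s x (Zf s F)
      = -((((2 ^ s : ℕ) : ℤ) + 1) * psiS s c (R3f s F)) := by
    rw [Finset.sum_congr rfl (fun x hx => by rw [class_chi_3 hs hF hω hx])]
    unfold psiS
    rw [Finset.mul_sum, ← Finset.sum_neg_distrib]
    apply Finset.sum_congr rfl
    intro x _
    ring
  rw [h1, h2, h3]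
  ring

lemma sum_identity_E3 (c : F) :
    psiS s c (R1f s F) + (psiS s c (R2f s F) + psiS s c (R3f s F))
      = ((2 ^ (3 * s) : ℕ) : ℤ) * I0 c - 1 := by
  unfold psiS
  rw [← sum_decomp hs hF (fun x => psi0 s (c * x)), psi0_erase_sum_y hs hF c]
  unfold I0
  split <;> ring

lemma psi1_form (c : F) :
    psiS s c (R1f s F) = ((2 ^ (2 * s) : ℕ) : ℤ) * I0 c
      + ((2 ^ (2 * s) : ℕ) : ℤ) * IEe s c - 1 := by
  rw [psiS_R1f_eval hs hF hω c]
  unfold I0 IEe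
  rcases eq_or_ne c 0 with rfl | hc0
  · rw [if_pos zero_mem_Ef, if_pos rfl, if_neg (by simp : (0:F) ∉ (Ef s F).erase 0)]
    ring
  · by_cases hcE : c ∈ Ef s F
    · rw [if_pos hcE, if_neg hc0, if_pos (Finset.mem_erase.mpr ⟨hc0, hcE⟩)]
      ring
    · rw [if_neg hcE, if_neg hc0, if_neg (fun h => hcE (Finset.mem_erase.mp h).2)]
      ring

omit hω in
lemma cast_pow_facts :
    ((2 ^ (2 * s) : ℕ) : ℤ) = ((2 ^ s : ℕ) : ℤ) ^ 2
    ∧ ((2 ^ (3 * s) : ℕ) : ℤ) = ((2 ^ s : ℕ) : ℤ) ^ 3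
    ∧ ((2 ^ s : ℕ) : ℤ) = 2 * ((2 ^ (s - 1) : ℕ) : ℤ) := by
  refine ⟨?_, ?_, ?_⟩
  · push_cast
    rw [← pow_mul, mul_comm s 2]
  · push_cast
    rw [← pow_mul, mul_comm s 3]
  · have h1 : (2:ℕ) ^ s = 2 * 2 ^ (s - 1) := by
      conv_lhs => rw [show s = (s-1)+1 by omega]
      rw [pow_succ]
      ring
    exact_mod_cast congrArg (Nat.cast (R := ℤ)) h1

lemma psi2_form (c : F) :
    psiS s c (R2f s F)
      = 4 * ((2 ^ (s-1) : ℕ) : ℤ) ^ 3 * I0 c - 2 * ((2 ^ (s-1) : ℕ) : ℤ) ^ 2 * IEe s c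
        + 2 * ((2 ^ (s-1) : ℕ) : ℤ) ^ 2 * IZe s c - ((2 ^ (s-1) : ℕ) : ℤ) := by
  obtain ⟨hc2, hc3, hch⟩ := cast_pow_facts (F := F) hs hF
  have hdiff : -psiS s c (R1f s F) + ((((2 ^ s : ℕ) : ℤ) - 1) * psiS s c (R2f s F)
      - (((2 ^ s : ℕ) : ℤ) + 1) * psiS s c (R3f s F))
      = ((2 ^ (3 * s) : ℕ) : ℤ) * IZe s c - (((2 ^ (2 * s) : ℕ) : ℤ) - 1) := by
    rw [← diff_classes hs hF hω c, diff_identity hs hF hω c]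
  have hE3 := sum_identity_E3 hs hF hω c
  have hpsi1 := psi1_form hs hF hω c
  simp only [hc2, hc3, hch] at hdiff hE3 hpsi1
  have hhpos : (0:ℤ) < ((2 ^ (s-1) : ℕ) : ℤ) := by
    exact_mod_cast Nat.two_pow_pos (s-1)
  have hne : (2 * (2 * ((2 ^ (s-1) : ℕ) : ℤ)) : ℤ) ≠ 0 := by positivity
  apply mul_left_cancel₀ hne
  linear_combination hdiff + (2 * ((2 ^ (s-1) : ℕ) : ℤ) + 1) * hE3
    - (2 * ((2 ^ (s-1) : ℕ) : ℤ)) * hpsi1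

lemma psi3_form (c : F) :
    psiS s c (R3f s F)
      = (4 * ((2 ^ (s-1) : ℕ) : ℤ) ^ 3 - 4 * ((2 ^ (s-1) : ℕ) : ℤ) ^ 2) * I0 c
        - 2 * ((2 ^ (s-1) : ℕ) : ℤ) ^ 2 * IEe s c
        - 2 * ((2 ^ (s-1) : ℕ) : ℤ) ^ 2 * IZe s c + ((2 ^ (s-1) : ℕ) : ℤ) := by
  obtain ⟨hc2, hc3, hch⟩ := cast_pow_facts (F := F) hs hF
  have hdiff : -psiS s c (R1f s F) + ((((2 ^ s : ℕ) : ℤ) - 1) * psiS s c (R2f s F)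
      - (((2 ^ s : ℕ) : ℤ) + 1) * psiS s c (R3f s F))
      = ((2 ^ (3 * s) : ℕ) : ℤ) * IZe s c - (((2 ^ (2 * s) : ℕ) : ℤ) - 1) := by
    rw [← diff_classes hs hF hω c, diff_identity hs hF hω c]
  have hE3 := sum_identity_E3 hs hF hω c
  have hpsi1 := psi1_form hs hF hω c
  simp only [hc2, hc3, hch] at hdiff hE3 hpsi1
  have hne : (2 * (2 * ((2 ^ (s-1) : ℕ) : ℤ)) : ℤ) ≠ 0 := by positivity
  apply mul_left_cancel₀ hne
  linear_combination -hdiff + (2 * ((2 ^ (s-1) : ℕ) : ℤ) - 1) * hE3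
    - (2 * ((2 ^ (s-1) : ℕ) : ℤ)) * hpsi1

end Omega

section Omega
variable (hs : 1 ≤ s) (hF : Fintype.card F = 2 ^ (3 * s))
  {ω : F} (hω : ∀ x : F, x ≠ 0 → ∃ n : ℕ, x = ω ^ n)
include hs hF hω

omit hω in
lemma form_mul (A B C D A' B' C' D' : ℤ) (c : F) :
    (A * I0 c + B * IEe s c + C * IZe s c + D)
        * (A' * I0 c + B' * IEe s c + C' * IZe s c + D')
      = ((A + D) * (A' + D') - D * D') * I0 c + ((B + D) * (B' + D') - D * D') * IEe s c
        + ((C + D) * (C' + D') - D * D') * IZe s c + D * D' := by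
  unfold I0 IEe IZe
  rcases eq_or_ne c 0 with rfl | hc0
  · have hz : (0:F) ∉ Zf s F := by unfold Zf; simp
    rw [if_pos rfl, if_neg (by simp : (0:F) ∉ (Ef s F).erase 0), if_neg hz]
    ring
  · rw [if_neg hc0]
    by_cases hcE : c ∈ (Ef s F).erase 0
    · have hcZ : c ∉ Zf s F := by
        rw [Finset.mem_erase] at hcE
        unfold Zf
        simp only [Finset.mem_filter, Finset.mem_univ, true_and, not_and]
        intro _
        rw [Qf_of_E hs hF hcE.2]
        exact pow_ne_zero 2 hcE.1
      rw [if_pos hcE, if_neg hcZ]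
      ring
    · rw [if_neg hcE]
      by_cases hcZ : c ∈ Zf s F
      · rw [if_pos hcZ]
        ring
      · rw [if_neg hcZ]
        ring

lemma sum_eval (P Q R S : ℤ) (d : F) (hd : d ≠ 0) :
    ∑ c : F, psi0 s (c * d) * (P * I0 c + Q * IEe s c + R * IZe s c + S)
      = P + Q * ((if trFE s d = 0 then ((2 ^ s : ℕ) : ℤ) else 0) - 1)
        + R * psiS s d (Zf s F) := by
  have hexp : ∀ c : F, psi0 s (c * d) * (P * I0 c + Q * IEe s c + R * IZe s c + S)
      = P * (psi0 s (c * d) * I0 c) + Q * (psi0 s (c * d) * IEe s c)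
        + R * (psi0 s (c * d) * IZe s c) + S * psi0 s (c * d) := fun c => by ring
  rw [Finset.sum_congr rfl (fun c _ => hexp c), Finset.sum_add_distrib,
    Finset.sum_add_distrib, Finset.sum_add_distrib, ← Finset.mul_sum, ← Finset.mul_sum,
    ← Finset.mul_sum, ← Finset.mul_sum]
  have h1 : ∑ c : F, psi0 s (c * d) * I0 c = 1 := by
    unfold I0
    have hsp : ∀ c : F, psi0 s (c * d) * (if c = 0 then (1:ℤ) else 0)
        = if c = 0 then psi0 s (c * d) else 0 := fun c => by split <;> ring
    rw [Finset.sum_congr rfl (fun c _ => hsp c),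
      Finset.sum_ite_eq' Finset.univ (0:F) (fun c => psi0 s (c * d))]
    simp [psi0_zero]
  have h2 : ∑ c : F, psi0 s (c * d) * IEe s c
      = (if trFE s d = 0 then ((2 ^ s : ℕ) : ℤ) else 0) - 1 := by
    unfold IEe
    have hsp : ∀ c : F, psi0 s (c * d) * (if c ∈ (Ef s F).erase 0 then (1:ℤ) else 0)
        = if c ∈ (Ef s F).erase 0 then psi0 s (c * d) else 0 := fun c => by split <;> ring
    rw [Finset.sum_congr rfl (fun c _ => hsp c),
      Finset.sum_ite_mem Finset.univ ((Ef s F).erase 0) (fun c => psi0 s (c * d)),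
      Finset.univ_inter]
    have key := Finset.add_sum_erase (Ef s F) (fun c => psi0 s (c * d)) zero_mem_Ef
    simp only [zero_mul, psi0_zero] at key
    have hEf := sum_psi0_Ef hs hF hω d
    rw [hEf] at key
    linarith
  have h3 : ∑ c : F, psi0 s (c * d) * IZe s c = psiS s d (Zf s F) := by
    unfold IZe
    have hsp : ∀ c : F, psi0 s (c * d) * (if c ∈ Zf s F then (1:ℤ) else 0)
        = if c ∈ Zf s F then psi0 s (c * d) else 0 := fun c => by split <;> ring
    rw [Finset.sum_congr rfl (fun c _ => hsp c),
      Finset.sum_ite_mem Finset.univ (Zf s F) (fun c => psi0 s (c * d)),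
      Finset.univ_inter]
    unfold psiS
    apply Finset.sum_congr rfl
    intro u _
    rw [mul_comm]
  have h4 : ∑ c : F, psi0 s (c * d) = 0 := by
    have := sum_psi0 hs hF d
    rwa [if_neg hd] at this
  rw [h1, h2, h3, h4]
  ring

omit hω in
lemma count_identity (k l : Fin 4) (d : F) :
    ((2 ^ (3 * s) : ℕ) : ℤ)
        * (((Finset.univ.filter
            (fun z : F => z ∈ Rfin s F k ∧ d + z ∈ Rfin s F l)).card : ℕ) : ℤ)
      = ∑ c : F, psi0 s (c * d) * (psiS s c (Rfin s F k) * psiS s c (Rfin s F l)) := by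
  symm
  have hexp : ∀ c : F, psi0 s (c * d) * (psiS s c (Rfin s F k) * psiS s c (Rfin s F l))
      = ∑ z ∈ Rfin s F k, ∑ w ∈ Rfin s F l, psi0 s (c * (d + z + w)) := by
    intro c
    unfold psiS
    rw [Finset.sum_mul_sum, Finset.mul_sum]
    apply Finset.sum_congr rfl
    intro z _
    rw [Finset.mul_sum]
    apply Finset.sum_congr rfl
    intro w _
    rw [show psi0 s (c * z) * psi0 s (c * w) = psi0 s (c * z + c * w) from
      (psi0_mul hs hF _ _).symm]
    rw [show psi0 s (c * d) * psi0 s (c * z + c * w) = psi0 s (c * d + (c * z + c * w)) from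
      (psi0_mul hs hF _ _).symm]
    congr 1
    ring
  rw [Finset.sum_congr rfl (fun c _ => hexp c), Finset.sum_comm]
  rw [Finset.sum_congr rfl (fun z _ => (Finset.sum_comm :
    (∑ c : F, ∑ w ∈ Rfin s F l, psi0 s (c * (d + z + w)))
      = ∑ w ∈ Rfin s F l, ∑ c : F, psi0 s (c * (d + z + w))))]
  have hinner : ∀ z w : F, ∑ c : F, psi0 s (c * (d + z + w))
      = if w = d + z then ((2 ^ (3 * s) : ℕ) : ℤ) else 0 := by
    intro z w
    rw [sum_psi0 hs hF (d + z + w)]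
    congr 1
    simp only [eq_iff_iff]
    constructor
    · intro h
      have h2 : (d + z) + w = 0 := by linear_combination h
      exact (eq_of_add_eq_zero' hs hF h2).symm
    · intro h
      rw [h]
      exact addself hs hF (d + z)
  rw [Finset.sum_congr rfl (fun z _ => Finset.sum_congr rfl (fun w _ => hinner z w))]
  rw [Finset.sum_congr rfl (fun z _ =>
    Finset.sum_ite_eq' (Rfin s F l) (d + z) (fun _ => ((2 ^ (3 * s) : ℕ) : ℤ)))]
  have hfin : Finset.univ.filter (fun z : F => z ∈ Rfin s F k ∧ d + z ∈ Rfin s F l)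
      = (Rfin s F k).filter (fun z => d + z ∈ Rfin s F l) := by
    ext z
    simp
  rw [hfin]
  rw [← Finset.sum_filter (fun z => d + z ∈ Rfin s F l)
    (fun _ => ((2 ^ (3 * s) : ℕ) : ℤ))]
  rw [Finset.sum_const, nsmul_eq_mul]
  ring

/-- counts only depend on the invariants of d -/
lemma count_const_of (k l : Fin 4) {d d' : F} (hd0 : d ≠ 0) (hd'0 : d' ≠ 0)
    (ht : (trFE s d = 0) ↔ (trFE s d' = 0))
    (hchi : psiS s d (Zf s F) = psiS s d' (Zf s F)) :
    (Finset.univ.filter (fun z : F => z ∈ Rfin s F k ∧ d + z ∈ Rfin s F l)).card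
      = (Finset.univ.filter (fun z : F => z ∈ Rfin s F k ∧ d' + z ∈ Rfin s F l)).card := by
  set hh : ℤ := ((2 ^ (s-1) : ℕ) : ℤ) with hhdef
  obtain ⟨hc2, hc3, hch⟩ := cast_pow_facts (F := F) hs hF
  set A : Fin 4 → ℤ := ![0, (2*hh)^2, 4*hh^3, 4*hh^3 - 4*hh^2] with hA
  set B : Fin 4 → ℤ := ![0, (2*hh)^2, -(2*hh^2), -(2*hh^2)] with hB
  set C : Fin 4 → ℤ := ![0, 0, 2*hh^2, -(2*hh^2)] with hC
  set D : Fin 4 → ℤ := ![1, -1, -hh, hh] with hD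
  have hform : ∀ (j : Fin 4) (c : F), psiS s c (Rfin s F j)
      = A j * I0 c + B j * IEe s c + C j * IZe s c + D j := by
    intro j c
    fin_cases j
    · show psiS s c ({0} : Finset F) = A 0 * I0 c + B 0 * IEe s c + C 0 * IZe s c + D 0
      unfold psiS
      rw [Finset.sum_singleton, mul_zero, psi0_zero]
      simp only [hA, hB, hC, hD, Matrix.cons_val_zero]
      ring
    · show psiS s c (R1f s F) = A 1 * I0 c + B 1 * IEe s c + C 1 * IZe s c + D 1
      rw [psi1_form hs hF hω c, hc2, hch]
      simp only [hA, hB, hC, hD, Matrix.cons_val_one, Matrix.cons_val_zero, Matrix.head_cons]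
      ring
    · show psiS s c (R2f s F) = A 2 * I0 c + B 2 * IEe s c + C 2 * IZe s c + D 2
      rw [psi2_form hs hF hω c]
      simp only [hA, hB, hC, hD, Matrix.cons_val_two, Matrix.tail_cons, Matrix.head_cons]
      ring
    · show psiS s c (R3f s F) = A 3 * I0 c + B 3 * IEe s c + C 3 * IZe s c + D 3
      rw [psi3_form hs hF hω c]
      simp only [hA, hB, hC, hD, Matrix.cons_val_three, Matrix.tail_cons, Matrix.head_cons]
      ring
  have hprod : ∀ (e : F) (he : e ≠ 0),
      ∑ c : F, psi0 s (c * e) * (psiS s c (Rfin s F k) * psiS s c (Rfin s F l))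
      = ((A k + D k) * (A l + D l) - D k * D l)
        + ((B k + D k) * (B l + D l) - D k * D l)
          * ((if trFE s e = 0 then ((2 ^ s : ℕ) : ℤ) else 0) - 1)
        + ((C k + D k) * (C l + D l) - D k * D l) * psiS s e (Zf s F) := by
    intro e he
    have hpt : ∀ c : F, psiS s c (Rfin s F k) * psiS s c (Rfin s F l)
        = ((A k + D k) * (A l + D l) - D k * D l) * I0 c
          + ((B k + D k) * (B l + D l) - D k * D l) * IEe s c
          + ((C k + D k) * (C l + D l) - D k * D l) * IZe s c + D k * D l := by
      intro c
      rw [hform k c, hform l c]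
      exact form_mul hs hF _ _ _ _ _ _ _ _ c
    rw [Finset.sum_congr rfl (fun c _ => by rw [hpt c])]
    exact sum_eval hs hF hω _ _ _ _ e he
  have hQne : ((2 ^ (3 * s) : ℕ) : ℤ) ≠ 0 := by positivity
  have key : ((2 ^ (3 * s) : ℕ) : ℤ)
      * (((Finset.univ.filter
          (fun z : F => z ∈ Rfin s F k ∧ d + z ∈ Rfin s F l)).card : ℕ) : ℤ)
      = ((2 ^ (3 * s) : ℕ) : ℤ)
      * (((Finset.univ.filter
          (fun z : F => z ∈ Rfin s F k ∧ d' + z ∈ Rfin s F l)).card : ℕ) : ℤ) := by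
    rw [count_identity hs hF k l d, count_identity hs hF k l d']
    rw [hprod d hd0, hprod d' hd'0, hchi, if_congr ht rfl rfl]
  have := mul_left_cancel₀ hQne key
  exact_mod_cast this

lemma count_const (k l m : Fin 4) {d d' : F} (hd : d ∈ Rfin s F m) (hd' : d' ∈ Rfin s F m) :
    (Finset.univ.filter (fun z : F => z ∈ Rfin s F k ∧ d + z ∈ Rfin s F l)).card
      = (Finset.univ.filter (fun z : F => z ∈ Rfin s F k ∧ d' + z ∈ Rfin s F l)).card := by
  fin_cases m
  · have h1 : d = 0 := by simpa [Rfin] using hd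
    have h2 : d' = 0 := by simpa [Rfin] using hd'
    rw [h1, h2]
  · have h1 : d ∈ R1f s F := by simpa [Rfin] using hd
    have h2 : d' ∈ R1f s F := by simpa [Rfin] using hd'
    have e1 := class_chi_1 hs hF hω h1
    have e2 := class_chi_1 hs hF hω h2
    unfold R1f at h1 h2
    simp only [Finset.mem_filter, Finset.mem_univ, true_and] at h1 h2
    exact count_const_of hs hF hω k l h1.1 h2.1 (by rw [h1.2, h2.2]) (by rw [e1, e2])
  · have h1 : d ∈ R2f s F := by simpa [Rfin] using hd
    have h2 : d' ∈ R2f s F := by simpa [Rfin] using hd'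
    have e1 := class_chi_2 hs hF hω h1
    have e2 := class_chi_2 hs hF hω h2
    unfold R2f at h1 h2
    simp only [Finset.mem_filter, Finset.mem_univ, true_and] at h1 h2
    exact count_const_of hs hF hω k l h1.1 h2.1
      (by constructor <;> (intro h; exact absurd h (by tauto))) (by rw [e1, e2])
  · have h1 : d ∈ R3f s F := by simpa [Rfin] using hd
    have h2 : d' ∈ R3f s F := by simpa [Rfin] using hd'
    have e1 := class_chi_3 hs hF hω h1
    have e2 := class_chi_3 hs hF hω h2
    unfold R3f at h1 h2
    simp only [Finset.mem_filter, Finset.mem_univ, true_and] at h1 h2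
    exact count_const_of hs hF hω k l h1.1 h2.1
      (by constructor <;> (intro h; exact absurd h (by tauto))) (by rw [e1, e2])

end Omega

end S12


theorem statement12 (s : ℕ) (hs : 1 ≤ s) (F : Type*) [Field F] [Fintype F]
    (hF : Fintype.card F = 2 ^ (3 * s)) (ω : F)
    (hω : ∀ x : F, x ≠ 0 → ∃ n : ℕ, x = ω ^ n) :
    (∀ x : F, ∃! k : Fin 4, x ∈ Rfam s ω ω k) ∧
    ∃ p : Fin 4 → Fin 4 → Fin 4 → ℕ,
      ∀ k l m : Fin 4, ∀ d ∈ Rfam s ω ω m,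
        {z : F | z ∈ Rfam s ω ω k ∧ d + z ∈ Rfam s ω ω l}.ncard = p k l m := by
  classical
  refine ⟨S12.part1 hs hF hω, ?_⟩
  refine ⟨fun k l m =>
    if h : (S12.Rfin s F m).Nonempty then
      (Finset.univ.filter
        (fun z : F => z ∈ S12.Rfin s F k ∧ h.choose + z ∈ S12.Rfin s F l)).card
    else 0, ?_⟩
  intro k l m d hd
  have hR := S12.Rfam_eq_Rfin hs hF hω
  have hdfin : d ∈ S12.Rfin s F m := by
    rw [hR m] at hd
    exact Finset.mem_coe.mp hd
  have hne : (S12.Rfin s F m).Nonempty := ⟨d, hdfin⟩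
  simp only [dif_pos hne]
  have hset : {z : F | z ∈ Rfam s ω ω k ∧ d + z ∈ Rfam s ω ω l}
      = (↑(Finset.univ.filter
          (fun z : F => z ∈ S12.Rfin s F k ∧ d + z ∈ S12.Rfin s F l)) : Set F) := by
    ext z
    rw [Set.mem_setOf_eq, hR k, hR l]
    simp
  rw [hset, Set.ncard_coe_finset]
  exact S12.count_const hs hF hω k l m hdfin hne.choose_spec
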